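/- arXiv:1403.7927 — 7 statements merged into one kernel-verified Lean document; each statement's English description precedes it below -/
import Mathlib

section
/- Let ν be a complex number such that 1 + ν is not a nonpositive integer, let w > 0 be a real number, and let k be a natural number. Then the limit as μ → 0 (μ ranging over nonzero complex numbers) of (1/μ)·( w^{-μ} Γ(1+ν-μ)/Γ(1+k-μ) − w^{μ} Γ(1+ν+μ)/Γ(1+k+μ) ) exists and equals (2 Γ(1+ν)/k!)·( ψ(k+1) − ψ(1+ν) − ln w ). -/
open Filter Topology

/-- The digamma function ψ(s) = Γ′(s)/Γ(s). -/
noncomputable def digamma (s : ℂ) : ℂ := deriv Complex.Gamma s / Complex.Gamma s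

/-- For ν with 1+ν not a nonpositive integer, w > 0 and k ∈ ℕ,
lim_{μ→0, μ≠0} (1/μ)(w^{-μ} Γ(1+ν-μ)/Γ(1+k-μ) − w^{μ} Γ(1+ν+μ)/Γ(1+k+μ))
 = (2Γ(1+ν)/k!)(ψ(k+1) − ψ(1+ν) − ln w). -/
theorem limit_Bk_mu_zero (ν : ℂ) (hν : ∀ n : ℕ, 1 + ν ≠ -(n : ℂ))
    (w : ℝ) (hw : 0 < w) (k : ℕ) :
    Tendsto
      (fun μ : ℂ => (1/μ) *
        (Complex.exp (-μ * Real.log w) * Complex.Gamma (1 + ν - μ) / Complex.Gamma (1 + k - μ)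
          - Complex.exp (μ * Real.log w) * Complex.Gamma (1 + ν + μ) / Complex.Gamma (1 + k + μ)))
      (nhdsWithin 0 {0}ᶜ)
      (nhds ((2 * Complex.Gamma (1 + ν) / (k.factorial : ℂ)) *
        (digamma (k + 1) - digamma (1 + ν) - Real.log w))) := by
  set L : ℂ := (Real.log w : ℂ) with hL
  set f : ℂ → ℂ := fun μ =>
    Complex.exp (-μ * L) * Complex.Gamma (1 + ν - μ) / Complex.Gamma (1 + k - μ) with hf_def
  have hkν : ∀ m : ℕ, (1 : ℂ) + k ≠ -m := by
    intro m h
    have := congrArg Complex.re h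
    simp [Complex.add_re] at this
    have h1 : (0:ℝ) ≤ (k:ℝ) := Nat.cast_nonneg k
    have h2 : (0:ℝ) ≤ (m:ℝ) := Nat.cast_nonneg m
    linarith
  have hA : Complex.Gamma (1 + ν) ≠ 0 := Complex.Gamma_ne_zero hν
  have hB : Complex.Gamma (1 + k) ≠ 0 := Complex.Gamma_ne_zero hkν
  have hBfac : Complex.Gamma (1 + (k:ℂ)) = (k.factorial : ℂ) := by
    rw [add_comm]
    exact_mod_cast Complex.Gamma_nat_eq_factorial k
  -- derivative pieces
  have hν' : HasDerivAt (fun μ : ℂ => 1 + ν - μ) (-1) 0 := by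
    simpa using (hasDerivAt_id (0:ℂ)).const_sub (1 + ν)
  have hk' : HasDerivAt (fun μ : ℂ => 1 + (k:ℂ) - μ) (-1) 0 := by
    simpa using (hasDerivAt_id (0:ℂ)).const_sub (1 + (k:ℂ))
  have hGν : HasDerivAt (fun μ : ℂ => Complex.Gamma (1 + ν - μ))
      (deriv Complex.Gamma (1 + ν) * (-1)) 0 := by
    have hg : HasDerivAt Complex.Gamma (deriv Complex.Gamma (1 + ν)) ((fun μ : ℂ => 1 + ν - μ) 0) := by
      simpa using (Complex.differentiableAt_Gamma _ hν).hasDerivAt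
    exact hg.comp 0 hν'
  have hGk : HasDerivAt (fun μ : ℂ => Complex.Gamma (1 + (k:ℂ) - μ))
      (deriv Complex.Gamma (1 + k) * (-1)) 0 := by
    have hg : HasDerivAt Complex.Gamma (deriv Complex.Gamma (1 + k)) ((fun μ : ℂ => 1 + (k:ℂ) - μ) 0) := by
      simpa using (Complex.differentiableAt_Gamma _ hkν).hasDerivAt
    exact hg.comp 0 hk'
  have hexp : HasDerivAt (fun μ : ℂ => Complex.exp (-μ * L)) (-L) 0 := by
    have h1 : HasDerivAt (fun μ : ℂ => -μ * L) (-L) 0 := by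
      simpa using ((hasDerivAt_id (0:ℂ)).neg.mul_const L)
    simpa using h1.cexp
  -- raw derivative of f at 0
  have hNum : HasDerivAt (fun μ : ℂ => Complex.exp (-μ * L) * Complex.Gamma (1 + ν - μ))
      (-L * Complex.Gamma (1 + ν) + 1 * (deriv Complex.Gamma (1 + ν) * (-1))) 0 := by
    have := hexp.mul hGν
    simpa [Pi.mul_def] using this
  have hfE : HasDerivAt f
      (((-L * Complex.Gamma (1 + ν) + 1 * (deriv Complex.Gamma (1 + ν) * (-1))) *
          Complex.Gamma (1 + k)
        - Complex.Gamma (1 + ν) * (deriv Complex.Gamma (1 + k) * (-1))) /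
        Complex.Gamma (1 + k) ^ 2) 0 := by
    have := hNum.div hGk (by simpa using hB)
    simpa [hf_def, Pi.div_def] using this
  set D : ℂ := (Complex.Gamma (1 + ν) / (k.factorial : ℂ)) *
      (digamma (1 + k) - digamma (1 + ν) - L) with hD
  have hfD : HasDerivAt f D 0 := by
    convert hfE using 1
    rw [hD, digamma, digamma, ← hBfac]
    field_simp
    ring
  -- slope limits
  have T1 : Tendsto (slope f 0) (nhdsWithin 0 {0}ᶜ) (nhds D) :=
    hasDerivAt_iff_tendsto_slope.mp hfD
  have hgD : HasDerivAt (fun μ : ℂ => f (-μ)) (-D) 0 := by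
    have h0 : HasDerivAt f D (-(0:ℂ)) := by simpa using hfD
    simpa [Function.comp_def] using h0.comp 0 (hasDerivAt_neg (0:ℂ))
  have T2 : Tendsto (slope (fun μ : ℂ => f (-μ)) 0) (nhdsWithin 0 {0}ᶜ) (nhds (-D)) :=
    hasDerivAt_iff_tendsto_slope.mp hgD
  have T : Tendsto (fun μ : ℂ => slope f 0 μ - slope (fun μ : ℂ => f (-μ)) 0 μ)
      (nhdsWithin 0 {0}ᶜ) (nhds (D - -D)) := T1.sub T2
  have key : Tendsto (fun μ : ℂ => (1/μ) * (f μ - f (-μ))) (nhdsWithin 0 {0}ᶜ)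
      (nhds (D - -D)) := by
    refine T.congr' ?_
    filter_upwards [self_mem_nhdsWithin] with μ hμ
    have hμ0 : μ ≠ 0 := hμ
    simp only [slope_def_field]
    field_simp
    simp only [neg_zero, sub_zero]
    ring
  have heq : (fun μ : ℂ => (1/μ) *
        (Complex.exp (-μ * Real.log w) * Complex.Gamma (1 + ν - μ) / Complex.Gamma (1 + k - μ)
          - Complex.exp (μ * Real.log w) * Complex.Gamma (1 + ν + μ) / Complex.Gamma (1 + k + μ)))
      = (fun μ : ℂ => (1/μ) * (f μ - f (-μ))) := by
    funext μ
    simp [hf_def, sub_neg_eq_add, hL]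
  rw [heq]
  convert key using 2
  rw [hD]
  have h1k : (1 : ℂ) + k = (k : ℂ) + 1 := by ring
  rw [h1k]
  field_simp
  ring
end

section
/- Let a, b, c, ω be complex numbers with Re b > 0 and Re(c + ω − b) > 0, let z > 0 be real, and set α = ln((z+1)/z) (a positive real number). Then ∫_0^1 u^{b-1} (1-u)^{c+ω-b-1} (1 + z u)^{-a} du = (1+z)^{-a} ∫_0^∞ t^{b-1} (t+α)^{-a} f(t) e^{-ω t} dt, where f(t) = ((e^t − 1)/t)^{b-1} · e^{(1+a-c) t} · ((e^t − e^{-α})/(t+α))^{-a}, and both integrals converge. (This is the change of variables u = 1 − e^{-t}.) -/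
open MeasureTheory Set Complex

lemma cpow_pos_eq' {x : ℝ} (hx : 0 < x) (s : ℂ) :
    (x : ℂ) ^ s = Complex.exp (s * (Real.log x : ℂ)) := by
  rw [Complex.cpow_def_of_ne_zero (by exact_mod_cast hx.ne'),
    Complex.ofReal_log hx.le, mul_comm]

lemma gauss_cov_pointwise (a b c ω : ℂ) (z α t : ℝ) (hz : 0 < z) (ht : 0 < t)
    (hα : α = Real.log ((z + 1) / z)) :
    (Real.exp (-t) : ℂ) *
      (((1 - Real.exp (-t) : ℝ) : ℂ) ^ (b - 1) *
        ((1 - (1 - Real.exp (-t)) : ℝ) : ℂ) ^ (c + ω - b - 1) *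
        ((1 + z * (1 - Real.exp (-t)) : ℝ) : ℂ) ^ (-a)) =
    ((1 + z : ℝ) : ℂ) ^ (-a) *
      ((t : ℂ) ^ (b - 1) * ((t + α : ℝ) : ℂ) ^ (-a) *
        ((((Real.exp t - 1) / t : ℝ) : ℂ) ^ (b - 1) * Complex.exp ((1 + a - c) * t) *
          (((Real.exp t - Real.exp (-α)) / (t + α) : ℝ) : ℂ) ^ (-a)) *
        Complex.exp (-ω * t)) := by
  have hα0 : 0 < α := by
    rw [hα]; apply Real.log_pos; rw [lt_div_iff₀ hz]; linarith
  have hexpα : Real.exp (-α) = z / (z + 1) := by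
    rw [hα, ← Real.log_inv, Real.exp_log (by positivity), inv_div]
  have he1 : (1:ℝ) < Real.exp t := by
    rw [← Real.exp_zero]; exact Real.exp_lt_exp.2 ht
  have heα : Real.exp (-α) < 1 := by
    rw [← Real.exp_zero]; exact Real.exp_lt_exp.2 (by linarith)
  have h1 : (0:ℝ) < Real.exp t - 1 := by linarith
  have h2 : (0:ℝ) < Real.exp t - Real.exp (-α) := by linarith
  have h3 : (0:ℝ) < t + α := by linarith
  have h4 : (0:ℝ) < 1 - Real.exp (-t) := by
    have : Real.exp (-t) < 1 := by
      rw [← Real.exp_zero]; exact Real.exp_lt_exp.2 (by linarith)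
    linarith
  have h5 : (0:ℝ) < 1 + z * (1 - Real.exp (-t)) := by nlinarith
  have h6 : (0:ℝ) < 1 + z := by linarith
  have hept : (0:ℝ) < Real.exp (-t) := Real.exp_pos _
  have l4 : Real.log (1 - Real.exp (-t)) = -t + Real.log (Real.exp t - 1) := by
    have : (1 - Real.exp (-t)) = Real.exp (-t) * (Real.exp t - 1) := by
      rw [mul_sub, ← Real.exp_add]; simp
    rw [this, Real.log_mul hept.ne' h1.ne', Real.log_exp]
  have l5 : Real.log (1 + z * (1 - Real.exp (-t)))
      = Real.log (1 + z) + (-t + Real.log (Real.exp t - Real.exp (-α))) := by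
    have key : (1 + z * (1 - Real.exp (-t)))
        = (1 + z) * (Real.exp (-t) * (Real.exp t - Real.exp (-α))) := by
      rw [hexpα]
      field_simp
      have hee : Real.exp (-t) * Real.exp t = 1 := by rw [← Real.exp_add]; simp
      linear_combination (-(1+z)^2)*hee
    rw [key, Real.log_mul h6.ne' (by positivity),
      Real.log_mul hept.ne' h2.ne', Real.log_exp]
  have ld1 : Real.log ((Real.exp t - 1) / t) = Real.log (Real.exp t - 1) - Real.log t :=
    Real.log_div h1.ne' ht.ne'
  have ld2 : Real.log ((Real.exp t - Real.exp (-α)) / (t + α))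
      = Real.log (Real.exp t - Real.exp (-α)) - Real.log (t + α) :=
    Real.log_div h2.ne' h3.ne'
  have hsimp : (1 - (1 - Real.exp (-t)) : ℝ) = Real.exp (-t) := by ring
  rw [hsimp, cpow_pos_eq' h4, cpow_pos_eq' hept, cpow_pos_eq' h5, cpow_pos_eq' h6,
    cpow_pos_eq' ht, cpow_pos_eq' h3,
    cpow_pos_eq' (by positivity : (0:ℝ) < (Real.exp t - 1)/t),
    cpow_pos_eq' (by positivity : (0:ℝ) < (Real.exp t - Real.exp (-α))/(t+α)),
    l4, l5, ld1, ld2, Real.log_exp, Complex.ofReal_exp]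
  simp only [← Complex.exp_add]
  congr 1
  push_cast
  ring


/-- For Re b > 0, Re(c+ω−b) > 0, z > 0 real, α = ln((z+1)/z),
the Euler-type integral over (0,1) equals (1+z)^{-a} times a Laplace-type integral
over (0,∞) obtained by the change of variables u = 1 − e^{-t}, and both converge. -/
theorem gauss_integral_change_of_variables (a b c ω : ℂ) (hb : 0 < b.re)
    (hcb : 0 < (c + ω - b).re) (z : ℝ) (hz : 0 < z) (α : ℝ)
    (hα : α = Real.log ((z + 1) / z))
    (f : ℝ → ℂ)
    (hf : ∀ t : ℝ, f t =
      (((Real.exp t - 1) / t : ℝ) : ℂ) ^ (b - 1) * Complex.exp ((1 + a - c) * t) *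
        (((Real.exp t - Real.exp (-α)) / (t + α) : ℝ) : ℂ) ^ (-a)) :
    IntegrableOn
      (fun u : ℝ => (u : ℂ) ^ (b - 1) * ((1 - u : ℝ) : ℂ) ^ (c + ω - b - 1) *
        ((1 + z * u : ℝ) : ℂ) ^ (-a)) (Set.Ioo 0 1) ∧
    IntegrableOn
      (fun t : ℝ => (t : ℂ) ^ (b - 1) * ((t + α : ℝ) : ℂ) ^ (-a) * f t *
        Complex.exp (-ω * t)) (Set.Ioi 0) ∧
    (∫ u in Set.Ioo (0:ℝ) 1,
        (u : ℂ) ^ (b - 1) * ((1 - u : ℝ) : ℂ) ^ (c + ω - b - 1) *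
          ((1 + z * u : ℝ) : ℂ) ^ (-a)) =
      ((1 + z : ℝ) : ℂ) ^ (-a) *
        ∫ t in Set.Ioi (0:ℝ),
          (t : ℂ) ^ (b - 1) * ((t + α : ℝ) : ℂ) ^ (-a) * f t * Complex.exp (-ω * t) := by
  set F : ℝ → ℂ := fun u : ℝ => (u : ℂ) ^ (b - 1) * ((1 - u : ℝ) : ℂ) ^ (c + ω - b - 1) *
        ((1 + z * u : ℝ) : ℂ) ^ (-a) with hF_def
  set G : ℝ → ℂ := fun t : ℝ => (t : ℂ) ^ (b - 1) * ((t + α : ℝ) : ℂ) ^ (-a) * f t *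
        Complex.exp (-ω * t) with hG_def
  set g : ℝ → ℝ := fun t => 1 - Real.exp (-t) with hg_def
  -- derivative
  have hderiv : ∀ t ∈ Ioi (0:ℝ), HasDerivWithinAt g (Real.exp (-t)) (Ioi 0) t := by
    intro t _
    have : HasDerivAt g (Real.exp (-t)) t := by
      simpa using ((Real.hasDerivAt_exp (-t)).comp t (hasDerivAt_neg t)).const_sub 1
    exact this.hasDerivWithinAt
  -- injectivity
  have hinj : InjOn g (Ioi 0) := by
    have : StrictMono g := by
      intro x y hxy
      have := Real.exp_lt_exp.2 (neg_lt_neg hxy)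
      simp only [hg_def]; linarith
    exact this.injective.injOn
  -- image
  have himg : g '' (Ioi 0) = Ioo 0 1 := by
    ext u
    constructor
    · rintro ⟨t, ht, rfl⟩
      simp only [hg_def, mem_Ioo]
      have h1 : Real.exp (-t) < 1 := by
        rw [← Real.exp_zero]; exact Real.exp_lt_exp.2 (by simpa using ht)
      have h2 : 0 < Real.exp (-t) := Real.exp_pos _
      constructor <;> linarith
    · rintro ⟨h0, h1⟩
      refine ⟨-Real.log (1 - u), ?_, ?_⟩
      · simp only [mem_Ioi]
        exact neg_pos.2 (Real.log_neg (by linarith) (by linarith))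
      · simp only [hg_def, neg_neg, Real.exp_log (by linarith : (0:ℝ) < 1 - u)]
        ring
  -- integrability of F on Ioo 0 1
  have h1z : (0:ℝ) < 1 + z := by linarith
  have hFint : IntegrableOn F (Ioo 0 1) := by
    have hbeta := Complex.betaIntegral_convergent hb hcb
    have hbeta' : IntegrableOn
        (fun x : ℝ => (x : ℂ) ^ (b - 1) * (1 - (x : ℂ)) ^ ((c + ω - b) - 1)) (Ioo 0 1) :=
      ((intervalIntegrable_iff_integrableOn_Ioc_of_le (by norm_num)).1 hbeta).mono_set
        Ioo_subset_Ioc_self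
    set C : ℝ := max 1 ((1 + z) ^ (-a.re)) with hC
    have hmeas : AEStronglyMeasurable (fun u : ℝ => ((1 + z * u : ℝ) : ℂ) ^ (-a))
        (volume.restrict (Ioo 0 1)) := by
      apply ContinuousOn.aestronglyMeasurable _ measurableSet_Ioo
      intro x hx
      apply ContinuousAt.continuousWithinAt
      apply ContinuousAt.cpow
      · exact (Complex.continuous_ofReal.comp (by continuity)).continuousAt
      · exact continuousAt_const
      · have : (0:ℝ) < 1 + z * x := by nlinarith [hx.1, hx.2]
        exact Complex.ofReal_mem_slitPlane.2 this
    have hbound : ∀ᵐ u ∂(volume.restrict (Ioo 0 1)),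
        ‖((1 + z * u : ℝ) : ℂ) ^ (-a)‖ ≤ C := by
      rw [ae_restrict_iff' measurableSet_Ioo]
      filter_upwards with u hu
      have hpos : (0:ℝ) < 1 + z * u := by nlinarith [hu.1, hu.2]
      rw [Complex.norm_cpow_eq_rpow_re_of_pos hpos, Complex.neg_re]
      rcases le_or_gt 0 (-a.re) with h | h
      · refine le_trans (Real.rpow_le_rpow hpos.le
          (show 1 + z * u ≤ 1 + z by nlinarith [hu.1, hu.2]) h) (le_max_right _ _)
      · refine le_trans (Real.rpow_le_one_of_one_le_of_nonpos
          (by nlinarith [hu.1, hu.2]) h.le) (le_max_left _ _)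
    have := hbeta'.bdd_mul (c := C) hmeas hbound
    apply this.congr
    filter_upwards with u
    simp only [hF_def]
    push_cast
    ring
  -- change of variables machinery
  have hiff := integrableOn_image_iff_integrableOn_abs_deriv_smul measurableSet_Ioi hderiv hinj F
  have hchg := integral_image_eq_integral_abs_deriv_smul measurableSet_Ioi hderiv hinj F
  rw [himg] at hiff hchg
  -- pointwise identity
  have hpt : ∀ t ∈ Ioi (0:ℝ),
      |Real.exp (-t)| • F (g t) = ((1 + z : ℝ) : ℂ) ^ (-a) * G t := by
    intro t ht
    rw [abs_of_pos (Real.exp_pos _), Complex.real_smul, Complex.ofReal_exp]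
    simp only [hF_def, hG_def, hg_def, hf t]
    rw [← Complex.ofReal_exp]
    exact gauss_cov_pointwise a b c ω z α t hz ht hα
  have hGconst : IntegrableOn (fun t => ((1 + z : ℝ) : ℂ) ^ (-a) * G t) (Ioi 0) :=
    (hiff.1 hFint).congr ((ae_restrict_iff' measurableSet_Ioi).2 (.of_forall hpt))
  have hne : ((1 + z : ℝ) : ℂ) ^ (-a) ≠ 0 := by
    rw [cpow_pos_eq' h1z]; exact Complex.exp_ne_zero _
  refine ⟨hFint, (integrable_const_mul_iff (isUnit_iff_ne_zero.2 hne) G).1 hGconst, ?_⟩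
  rw [hchg, setIntegral_congr_fun measurableSet_Ioi hpt, MeasureTheory.integral_const_mul]
end

section
/- Let α > 0 and ω > 0 be real numbers and let a, b be complex numbers with Re b > 0. For each natural number n define Φ_n = (1/Γ(b)) ∫_0^∞ t^{n+b-1} (t+α)^{-a} e^{-ω t} dt. Then for every integer n ≥ 1 the three-term recurrence ω Φ_{n+1} = (n + b − a − α ω) Φ_n + α (b + n − 1) Φ_{n-1} holds. -/
open MeasureTheory Set Complex

namespace PhiAux

/-- The basic integrand. -/
noncomputable def F (α ω : ℝ) (a d : ℂ) (t : ℝ) : ℂ :=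
  (t : ℂ) ^ (d - 1) * ((t : ℂ) + α) ^ (-a) * Complex.exp (-(ω : ℂ) * t)

lemma exp_dom_integrable {s ω : ℝ} (hs : -1 < s) (hω : 0 < ω) :
    IntegrableOn (fun t : ℝ => t ^ s * Real.exp (-ω * t)) (Ioi 0) := by
  have := integrableOn_rpow_mul_exp_neg_mul_rpow hs zero_lt_one hω
  simpa only [Real.rpow_one] using this

lemma norm_F {α ω : ℝ} (hα : 0 < α) (a d : ℂ) {t : ℝ} (ht : 0 < t) :
    ‖F α ω a d t‖ = t ^ (d.re - 1) * (t + α) ^ (-a.re) * Real.exp (-(ω * t)) := by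
  have htα : 0 < t + α := by linarith
  have h2 : ((t : ℂ) + α) = ((t + α : ℝ) : ℂ) := by push_cast; ring
  rw [F, h2, norm_mul, norm_mul,
    Complex.norm_cpow_eq_rpow_re_of_pos ht, Complex.norm_cpow_eq_rpow_re_of_pos htα,
    Complex.norm_exp]
  norm_num [Complex.sub_re, Complex.neg_re, Complex.mul_re]

lemma continuousOn_F {α : ℝ} (hα : 0 < α) (ω : ℝ) (a d : ℂ) : ContinuousOn (F α ω a d) (Ioi 0) := by
  intro t ht
  have ht0 : (0:ℝ) < t := ht
  apply ContinuousAt.continuousWithinAt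
  refine ContinuousAt.mul (ContinuousAt.mul ?_ ?_) ?_
  · exact Complex.continuousAt_ofReal_cpow_const _ _ (Or.inr ht0.ne')
  · apply ContinuousAt.cpow
    · exact (Complex.continuous_ofReal.continuousAt).add continuousAt_const
    · exact continuousAt_const
    · exact Or.inl (by simpa using (by linarith : (0:ℝ) < t + α))
  · exact (Complex.continuous_exp.comp (by fun_prop)).continuousAt


lemma integrableOn_F {α ω : ℝ} (hα : 0 < α) (hω : 0 < ω) (a : ℂ) {d : ℂ} (hd : 0 < d.re) :
    IntegrableOn (F α ω a d) (Ioi 0) := by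
  have hmeas : AEStronglyMeasurable (F α ω a d) (volume.restrict (Ioi 0)) :=
    (continuousOn_F hα ω a d).aestronglyMeasurable measurableSet_Ioi
  rcases le_or_gt 0 a.re with ha | ha
  · refine Integrable.mono'
      ((exp_dom_integrable (by linarith : (-1:ℝ) < d.re - 1) hω).const_mul (α ^ (-a.re)))
      hmeas ?_
    filter_upwards [ae_restrict_mem measurableSet_Ioi] with t ht
    have ht0 : (0:ℝ) < t := ht
    rw [norm_F hα a d ht0, show -(ω * t) = -ω * t by ring]
    have h1 : (t + α) ^ (-a.re) ≤ α ^ (-a.re) :=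
      Real.rpow_le_rpow_of_nonpos hα (by linarith) (by linarith)
    calc t ^ (d.re - 1) * (t + α) ^ (-a.re) * Real.exp (-ω * t)
        ≤ t ^ (d.re - 1) * α ^ (-a.re) * Real.exp (-ω * t) := by
          gcongr
      _ = α ^ (-a.re) * (t ^ (d.re - 1) * Real.exp (-ω * t)) := by ring
  · set p : ℝ := -a.re with hp
    have hp0 : 0 < p := by simp [hp]; linarith
    refine Integrable.mono'
      (((exp_dom_integrable (by linarith : (-1:ℝ) < d.re - 1 + p) hω).const_mul
          ((2:ℝ) ^ p)).add
        ((exp_dom_integrable (by linarith : (-1:ℝ) < d.re - 1) hω).const_mul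
          ((2:ℝ) ^ p * α ^ p)))
      hmeas ?_
    filter_upwards [ae_restrict_mem measurableSet_Ioi] with t ht
    have ht0 : (0:ℝ) < t := ht
    rw [norm_F hα a d ht0, show -(ω * t) = -ω * t by ring]
    have hbound : (t + α) ^ p ≤ 2 ^ p * t ^ p + 2 ^ p * α ^ p := by
      rcases le_total t α with h | h
      · have h1 : (t + α) ^ p ≤ (2 * α) ^ p :=
          Real.rpow_le_rpow (by linarith) (by linarith) hp0.le
        have h2 : (2 * α) ^ p = 2 ^ p * α ^ p := Real.mul_rpow (by norm_num) hα.le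
        have h3 : 0 ≤ 2 ^ p * t ^ p := by positivity
        linarith
      · have h1 : (t + α) ^ p ≤ (2 * t) ^ p :=
          Real.rpow_le_rpow (by linarith) (by linarith) hp0.le
        have h2 : (2 * t) ^ p = 2 ^ p * t ^ p := Real.mul_rpow (by norm_num) ht0.le
        have h3 : 0 ≤ 2 ^ p * α ^ p := by positivity
        linarith
    have hsplit : t ^ (d.re - 1 + p) = t ^ (d.re - 1) * t ^ p :=
      Real.rpow_add ht0 _ _
    calc t ^ (d.re - 1) * (t + α) ^ p * Real.exp (-ω * t)
        ≤ t ^ (d.re - 1) * (2 ^ p * t ^ p + 2 ^ p * α ^ p) * Real.exp (-ω * t) := by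
          gcongr
      _ = 2 ^ p * (t ^ (d.re - 1 + p) * Real.exp (-ω * t))
          + 2 ^ p * α ^ p * (t ^ (d.re - 1) * Real.exp (-ω * t)) := by
          rw [hsplit]; ring


noncomputable def G (α ω : ℝ) (a c : ℂ) (t : ℝ) : ℂ :=
  (t : ℂ) ^ c * ((t : ℂ) + α) ^ (1 - a) * Complex.exp (-(ω : ℂ) * t)

lemma hasDerivAt_G {α : ℝ} (hα : 0 < α) (ω : ℝ) (a c : ℂ) {t : ℝ} (ht : 0 < t) :
    HasDerivAt (G α ω a c)
      (-(ω : ℂ) * F α ω a (c + 2) t + (c + 1 - a - (α : ℝ) * ω) * F α ω a (c + 1) t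
        + c * α * F α ω a c t) t := by
  have hx : (t : ℂ) ≠ 0 := by exact_mod_cast ht.ne'
  have hyre : (0:ℝ) < t + α := by linarith
  have hy : ((t : ℂ) + α) ≠ 0 := by
    intro h
    have := congrArg Complex.re h
    simp at this
    linarith
  have h1 : HasDerivAt (fun s : ℝ => (s : ℂ) ^ c) (c * (t : ℂ) ^ (c - 1)) t :=
    (Complex.hasStrictDerivAt_cpow_const (c := c)
      (Complex.mem_slitPlane_iff.2 (Or.inl (by simpa using ht)))).hasDerivAt.comp_ofReal
  have h2 : HasDerivAt (fun s : ℝ => ((s : ℂ) + α) ^ (1 - a))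
      ((1 - a) * ((t : ℂ) + α) ^ (-a)) t := by
    have hd : HasDerivAt (fun z : ℂ => z + (α : ℂ)) 1 (t : ℂ) :=
      (hasDerivAt_id _).add_const _
    have := (HasDerivAt.cpow_const (c := 1 - a) hd
      (Complex.mem_slitPlane_iff.2 (Or.inl (by simpa using hyre)))).comp_ofReal
    simpa [show (1 : ℂ) - a - 1 = -a by ring] using this
  have h3 : HasDerivAt (fun s : ℝ => Complex.exp (-(ω : ℂ) * s))
      (-(ω : ℂ) * Complex.exp (-(ω : ℂ) * t)) t := by
    have hd : HasDerivAt (fun z : ℂ => -(ω : ℂ) * z) (-(ω : ℂ)) (t : ℂ) := by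
      simpa using (hasDerivAt_id ((t : ℝ) : ℂ)).const_mul (-(ω : ℂ))
    have := hd.cexp.comp_ofReal
    simpa [mul_comm] using this
  have key := (h1.mul h2).mul h3
  refine HasDerivAt.congr_deriv key (Eq.symm ?_)
  simp only [F, Pi.mul_apply]
  have A1 : (t : ℂ) ^ c = (t : ℂ) ^ (c - 1) * t := by
    rw [show c = c - 1 + 1 by ring, Complex.cpow_add _ _ hx, Complex.cpow_one]
    ring_nf
  have A2 : (t : ℂ) ^ (c + 2 - 1) = (t : ℂ) ^ (c - 1) * t * t := by
    rw [show c + 2 - 1 = (c - 1) + 1 + 1 by ring, Complex.cpow_add _ _ hx,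
      Complex.cpow_add _ _ hx, Complex.cpow_one]
  have A3 : (t : ℂ) ^ (c + 1 - 1) = (t : ℂ) ^ (c - 1) * t := by
    rw [show c + 1 - 1 = (c - 1) + 1 by ring, Complex.cpow_add _ _ hx, Complex.cpow_one]
  have A4 : ((t : ℂ) + α) ^ (1 - a) = ((t : ℂ) + α) * ((t : ℂ) + α) ^ (-a) := by
    rw [show (1 : ℂ) - a = 1 + -a by ring, Complex.cpow_add _ _ hy, Complex.cpow_one]
  rw [A2, A3, A1, A4]
  ring


lemma norm_G {α ω : ℝ} (hα : 0 < α) (a c : ℂ) {t : ℝ} (ht : 0 < t) :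
    ‖G α ω a c t‖ = t ^ c.re * (t + α) ^ (1 - a).re * Real.exp (-(ω * t)) := by
  have htα : 0 < t + α := by linarith
  have h2 : ((t : ℂ) + α) = ((t + α : ℝ) : ℂ) := by push_cast; ring
  rw [G, h2, norm_mul, norm_mul,
    Complex.norm_cpow_eq_rpow_re_of_pos ht, Complex.norm_cpow_eq_rpow_re_of_pos htα,
    Complex.norm_exp]
  norm_num [Complex.neg_re, Complex.mul_re]

lemma tendsto_G_atTop {α ω : ℝ} (hα : 0 < α) (hω : 0 < ω) (a c : ℂ) :
    Filter.Tendsto (G α ω a c) Filter.atTop (nhds 0) := by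
  set q : ℝ := (1 - a).re with hq
  have hlim : Filter.Tendsto (fun t : ℝ => (2:ℝ) ^ |q| * (t ^ (c.re + |q|) * Real.exp (-ω * t)))
      Filter.atTop (nhds 0) := by
    simpa using
      (tendsto_rpow_mul_exp_neg_mul_atTop_nhds_zero (c.re + |q|) ω hω).const_mul ((2:ℝ) ^ |q|)
  refine squeeze_zero_norm' ?_ hlim
  filter_upwards [Filter.eventually_ge_atTop (max α 1)] with t ht
  have ht1 : (1:ℝ) ≤ t := le_trans (le_max_right _ _) ht
  have htα : α ≤ t := le_trans (le_max_left _ _) ht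
  have ht0 : (0:ℝ) < t := by linarith
  have hb : (t + α) ^ q ≤ 2 ^ |q| * t ^ |q| := by
    rcases le_or_gt 0 q with h | h
    · rw [_root_.abs_of_nonneg h]
      calc (t + α) ^ q ≤ (2 * t) ^ q := Real.rpow_le_rpow (by linarith) (by linarith) h
        _ = 2 ^ q * t ^ q := Real.mul_rpow (by norm_num) ht0.le
    · have h1 : (t + α) ^ q ≤ t ^ q :=
        Real.rpow_le_rpow_of_nonpos ht0 (by linarith) h.le
      have h2 : t ^ q ≤ 1 := Real.rpow_le_one_of_one_le_of_nonpos ht1 h.le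
      have h3 : (1:ℝ) ≤ t ^ |q| := Real.one_le_rpow ht1 (abs_nonneg q)
      have h4 : (1:ℝ) ≤ 2 ^ |q| := Real.one_le_rpow (by norm_num) (abs_nonneg q)
      nlinarith
  rw [norm_G hα a c ht0, show -(ω * t) = -ω * t by ring]
  calc t ^ c.re * (t + α) ^ q * Real.exp (-ω * t)
      ≤ t ^ c.re * (2 ^ |q| * t ^ |q|) * Real.exp (-ω * t) := by
        gcongr
    _ = 2 ^ |q| * (t ^ (c.re + |q|) * Real.exp (-ω * t)) := by
        rw [Real.rpow_add ht0]; ring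

lemma continuousWithinAt_G {α ω : ℝ} (hα : 0 < α) (hω : 0 < ω) (a : ℂ) {c : ℂ}
    (hc : 0 < c.re) : ContinuousWithinAt (G α ω a c) (Ici 0) 0 := by
  have hc0 : c ≠ 0 := fun h => by simp [h] at hc
  have hG0 : G α ω a c 0 = 0 := by
    simp [G, Complex.zero_cpow hc0]
  rw [ContinuousWithinAt, hG0]
  set q : ℝ := (1 - a).re with hq
  set M : ℝ := α ^ q + (1 + α) ^ q with hM
  have hM0 : 0 ≤ M := by positivity
  have hlim : Filter.Tendsto (fun t : ℝ => M * t ^ c.re) (nhdsWithin 0 (Ici 0)) (nhds 0) := by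
    have h0 : Filter.Tendsto (fun t : ℝ => t ^ c.re) (nhds 0) (nhds 0) := by
      have := (Real.continuousAt_rpow_const 0 c.re (Or.inr hc.le)).tendsto
      simpa [Real.zero_rpow hc.ne'] using this
    simpa using (h0.mono_left nhdsWithin_le_nhds).const_mul M
  refine squeeze_zero_norm' ?_ hlim
  filter_upwards [Icc_mem_nhdsGE_of_mem (by norm_num : (0:ℝ) ∈ Ico (0:ℝ) 1)] with t ht
  rcases eq_or_lt_of_le ht.1 with h | ht0
  · rw [← h, hG0]
    simp [Real.zero_rpow hc.ne', hM0]
  · have hbq : (t + α) ^ q ≤ M := by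
      rcases le_or_gt 0 q with h | h
      · have h1 : (t + α) ^ q ≤ (1 + α) ^ q :=
          Real.rpow_le_rpow (by linarith) (by linarith [ht.2]) h
        have h2 : (0:ℝ) ≤ α ^ q := by positivity
        rw [hM]; linarith
      · have h1 : (t + α) ^ q ≤ α ^ q :=
          Real.rpow_le_rpow_of_nonpos hα (by linarith) h.le
        have h2 : (0:ℝ) ≤ (1 + α) ^ q := by positivity
        rw [hM]; linarith
    have hexp : Real.exp (-(ω * t)) ≤ 1 :=
      Real.exp_le_one_iff.2 (by nlinarith)
    rw [norm_G hα a c ht0]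
    calc t ^ c.re * (t + α) ^ q * Real.exp (-(ω * t))
        ≤ t ^ c.re * M * 1 := by gcongr
      _ = M * t ^ c.re := by ring


lemma key_rec {α ω : ℝ} (hα : 0 < α) (hω : 0 < ω) (a : ℂ) {c : ℂ} (hc : 0 < c.re) :
    (ω : ℂ) * ∫ t in Ioi (0:ℝ), F α ω a (c + 2) t =
      (c + 1 - a - (α : ℂ) * (ω : ℂ)) * (∫ t in Ioi (0:ℝ), F α ω a (c + 1) t)
        + c * (α : ℂ) * ∫ t in Ioi (0:ℝ), F α ω a c t := by
  have hc1 : 0 < (c + 1).re := by simp [Complex.add_re]; linarith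
  have hc2 : 0 < (c + 2).re := by simp [Complex.add_re]; linarith
  have hI2 := integrableOn_F hα hω a hc2
  have hI1 := integrableOn_F hα hω a hc1
  have hI0 := integrableOn_F hα hω a hc
  have hint : IntegrableOn (fun t => -(ω : ℂ) * F α ω a (c + 2) t
      + (c + 1 - a - (α : ℂ) * (ω : ℂ)) * F α ω a (c + 1) t + c * (α : ℂ) * F α ω a c t)
      (Ioi 0) :=
    ((hI2.const_mul _).add (hI1.const_mul _)).add (hI0.const_mul _)
  have hftc := integral_Ioi_of_hasDerivAt_of_tendsto
    (continuousWithinAt_G hα hω a hc)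
    (fun t ht => hasDerivAt_G hα ω a c (mem_Ioi.mp ht))
    hint (tendsto_G_atTop hα hω a c)
  have hG0 : G α ω a c 0 = 0 := by
    have hc0 : c ≠ 0 := fun h => by simp [h] at hc
    simp only [G, Complex.ofReal_zero, Complex.zero_cpow hc0, zero_mul]
  rw [hG0, sub_zero] at hftc
  have hA : Integrable (fun x : ℝ => -(ω : ℂ) * F α ω a (c + 2) x
      + (c + 1 - a - (α : ℂ) * (ω : ℂ)) * F α ω a (c + 1) x) (volume.restrict (Ioi 0)) :=
    (hI2.const_mul _).add (hI1.const_mul _)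
  rw [integral_add hA (hI0.const_mul _),
      integral_add (hI2.const_mul _) (hI1.const_mul _),
      integral_const_mul, integral_const_mul, integral_const_mul] at hftc
  linear_combination -hftc

end PhiAux

/-- For α, ω > 0 real and a, b complex with Re b > 0, the integrals
Φ_n = (1/Γ(b)) ∫_0^∞ t^{n+b-1} (t+α)^{-a} e^{-ωt} dt satisfy, for all n ≥ 1,
ω Φ_{n+1} = (n + b − a − αω) Φ_n + α(b + n − 1) Φ_{n-1}. -/
theorem Phi_three_term_recurrence (α ω : ℝ) (hα : 0 < α) (hω : 0 < ω)
    (a b : ℂ) (hb : 0 < b.re) (Φ : ℕ → ℂ)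
    (hΦ : ∀ n : ℕ, Φ n = (1 / Complex.Gamma b) *
      ∫ t in Set.Ioi (0:ℝ),
        (t : ℂ) ^ ((n : ℂ) + b - 1) * ((t + α : ℝ) : ℂ) ^ (-a) * Complex.exp (-(ω : ℂ) * t)) :
    ∀ n : ℕ, 1 ≤ n →
      (ω : ℂ) * Φ (n + 1) =
        ((n : ℂ) + b - a - (α : ℂ) * (ω : ℂ)) * Φ n + (α : ℂ) * (b + (n : ℂ) - 1) * Φ (n - 1) := by
  intro n hn
  obtain ⟨m, rfl⟩ : ∃ m, n = m + 1 := ⟨n - 1, (Nat.succ_pred_eq_of_pos hn).symm⟩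
  have hc : 0 < ((m : ℂ) + b).re := by
    simp only [Complex.add_re, Complex.natCast_re]
    have : (0:ℝ) ≤ m := Nat.cast_nonneg m
    linarith
  have key := PhiAux.key_rec hα hω a hc
  have hrep : ∀ k : ℕ, Φ k =
      (1 / Complex.Gamma b) * ∫ t in Ioi (0:ℝ), PhiAux.F α ω a ((k : ℂ) + b) t := by
    intro k
    rw [hΦ k]
    congr 1
    refine setIntegral_congr_fun measurableSet_Ioi (fun t ht => ?_)
    simp only [PhiAux.F]
    push_cast
    ring_nf
  simp only [Nat.add_sub_cancel]
  rw [hrep (m + 1 + 1), hrep (m + 1), hrep m,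
    show ((m + 1 + 1 : ℕ) : ℂ) + b = (m : ℂ) + b + 2 by push_cast; ring,
    show ((m + 1 : ℕ) : ℂ) + b = (m : ℂ) + b + 1 by push_cast; ring]
  push_cast
  linear_combination (1 / Complex.Gamma b) * key
end

section
/- Let α > 0 and ω > 0 be real numbers, let a, b be complex numbers with Re a > 0 and Re b > 0, and let n be a natural number. Then (1/Γ(b)) ∫_0^∞ t^{n+b-1} (t+α)^{-a} e^{-ω t} dt = ((b)_n · ω^{a-n-b} / Γ(a)) ∫_0^∞ s^{a-1} (1+s)^{-n-b} e^{-α ω s} ds, where both integrals converge absolutely. (Both sides are integral representations of the same Kummer U-function: Φ_n = (b)_n α^{n+b-a} U(n+b, n+b+1−a, αω) = (b)_n ω^{a-n-b} U(a, a+1−n−b, αω).) -/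
open MeasureTheory Set Complex Finset


/-- Real Gamma-type integrand with rate `r` is integrable on `Ioi 0`. -/
lemma phi_aux_real_int {A : ℝ} (hA : 0 < A) {r : ℝ} (hr : 0 < r) :
    IntegrableOn (fun t : ℝ => t ^ (A - 1) * Real.exp (-(r * t))) (Set.Ioi 0) := by
  have h := integrableOn_rpow_mul_exp_neg_mul_rpow (p := 1) (s := A - 1) (b := r)
    (by linarith) one_pos hr
  simpa [Real.rpow_one, neg_mul] using h

lemma phi_Gamma_add_nat (b : ℂ) (hb : 0 < b.re) (n : ℕ) :
    Complex.Gamma (b + n) = (∏ j ∈ Finset.range n, (b + j)) * Complex.Gamma b := by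
  induction n with
  | zero => simp
  | succ n ih =>
    have hne : b + (n : ℂ) ≠ 0 := by
      intro h
      have := congrArg Complex.re h
      simp only [Complex.add_re, Complex.natCast_re, Complex.zero_re] at this
      have : (0:ℝ) ≤ (n:ℝ) := Nat.cast_nonneg n
      linarith [congrArg Complex.re h, (by simp : (b + (n:ℂ)).re = b.re + n)]
    rw [Nat.cast_succ, ← add_assoc, Complex.Gamma_add_one _ hne, ih, Finset.prod_range_succ]
    ring


lemma phi_contOn_cpow (c : ℂ) : ContinuousOn (fun x : ℝ => (x : ℂ) ^ c) (Set.Ioi 0) := by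
  apply continuousOn_of_forall_continuousAt
  intro x hx
  exact (continuousAt_cpow_const (Complex.ofReal_mem_slitPlane.2 hx)).comp
    Complex.continuous_ofReal.continuousAt

lemma phi_contOn_cpow_shift (c : ℂ) {β : ℝ} (hβ : 0 < β) :
    ContinuousOn (fun x : ℝ => ((x + β : ℝ) : ℂ) ^ c) (Set.Ioi 0) := by
  apply continuousOn_of_forall_continuousAt
  intro x hx
  have hx' : (0:ℝ) < x + β := by have := Set.mem_Ioi.mp hx; linarith
  refine ContinuousAt.cpow ?_ continuousAt_const (Complex.ofReal_mem_slitPlane.2 hx')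
  exact (Complex.continuous_ofReal.comp (continuous_id.add continuous_const)).continuousAt

/-- First integrand of the theorem is integrable. -/
lemma phi_int1 {α ω : ℝ} (hα : 0 < α) (hω : 0 < ω) {a c : ℂ} (ha : 0 < a.re) (hc : 0 < c.re) :
    IntegrableOn
      (fun t : ℝ => (t : ℂ) ^ (c - 1) * ((t + α : ℝ) : ℂ) ^ (-a) *
        Complex.exp (-(ω : ℂ) * t)) (Set.Ioi 0) := by
  apply Integrable.mono' (((phi_aux_real_int hc hω).const_mul (α ^ (-a.re))))
  · refine ContinuousOn.aestronglyMeasurable ?_ measurableSet_Ioi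
    exact ((phi_contOn_cpow (c-1)).mul (phi_contOn_cpow_shift (-a) hα)).mul
      (Complex.continuous_exp.comp (continuous_const.mul Complex.continuous_ofReal)).continuousOn
  · rw [ae_restrict_iff' measurableSet_Ioi]
    filter_upwards with t ht
    rw [Set.mem_Ioi] at ht
    have h1 : -(ω:ℂ) * t = ((-(ω * t) : ℝ) : ℂ) := by push_cast; ring
    rw [h1, norm_mul, norm_mul,
      Complex.norm_cpow_eq_rpow_re_of_pos ht, Complex.norm_cpow_eq_rpow_re_of_pos (by positivity),
      Complex.norm_exp]
    simp only [Complex.ofReal_re, Complex.sub_re, Complex.one_re, Complex.neg_re]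
    have key : (t + α) ^ (-a.re) ≤ α ^ (-a.re) :=
      Real.rpow_le_rpow_of_nonpos hα (by linarith) (by linarith)
    calc t ^ (c.re - 1) * (t + α) ^ (-a.re) * Real.exp (-(ω * t))
        ≤ t ^ (c.re - 1) * α ^ (-a.re) * Real.exp (-(ω * t)) := by gcongr
      _ = α ^ (-a.re) * (t ^ (c.re - 1) * Real.exp (-(ω * t))) := by ring

/-- Second integrand of the theorem is integrable. -/
lemma phi_int2 {z : ℝ} (hz : 0 < z) {a c : ℂ} (ha : 0 < a.re) (hc : 0 < c.re) :
    IntegrableOn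
      (fun s : ℝ => (s : ℂ) ^ (a - 1) * ((1 + s : ℝ) : ℂ) ^ (-c) *
        Complex.exp (-(z : ℂ) * s)) (Set.Ioi 0) := by
  apply Integrable.mono' (phi_aux_real_int ha hz)
  · refine ContinuousOn.aestronglyMeasurable ?_ measurableSet_Ioi
    refine ((phi_contOn_cpow (a-1)).mul ?_).mul
      (Complex.continuous_exp.comp (continuous_const.mul Complex.continuous_ofReal)).continuousOn
    have := phi_contOn_cpow_shift (-c) (show (0:ℝ) < 1 by norm_num)
    simpa [add_comm] using this
  · rw [ae_restrict_iff' measurableSet_Ioi]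
    filter_upwards with s hs
    rw [Set.mem_Ioi] at hs
    have h1 : -(z:ℂ) * s = ((-(z * s) : ℝ) : ℂ) := by push_cast; ring
    rw [h1, norm_mul, norm_mul,
      Complex.norm_cpow_eq_rpow_re_of_pos hs, Complex.norm_cpow_eq_rpow_re_of_pos (by positivity),
      Complex.norm_exp]
    simp only [Complex.ofReal_re, Complex.sub_re, Complex.one_re, Complex.neg_re]
    have key : (1 + s) ^ (-c.re) ≤ 1 :=
      Real.rpow_le_one_of_one_le_of_nonpos (by linarith) (by linarith)
    calc s ^ (a.re - 1) * (1 + s) ^ (-c.re) * Real.exp (-(z * s))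
        ≤ s ^ (a.re - 1) * 1 * Real.exp (-(z * s)) := by gcongr
      _ = s ^ (a.re - 1) * Real.exp (-(z * s)) := by ring

lemma phi_norm3 {x y : ℝ} (hx : 0 < x) (hy : 0 < y) (u v : ℂ) (r : ℝ) :
    ‖(x : ℂ) ^ u * (y : ℂ) ^ v * Complex.exp ((r : ℂ))‖
      = x ^ u.re * y ^ v.re * Real.exp r := by
  rw [norm_mul, norm_mul,
    Complex.norm_cpow_eq_rpow_re_of_pos hx, Complex.norm_cpow_eq_rpow_re_of_pos hy,
    Complex.norm_exp, Complex.ofReal_re]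

lemma phi_prod_int {α ω : ℝ} (hα : 0 < α) (hω : 0 < ω) {a c : ℂ} (ha : 0 < a.re)
    (hc : 0 < c.re) :
    Integrable (Function.uncurry (fun x t : ℝ => (x:ℂ)^(a-1) * (t:ℂ)^(c-1) *
        Complex.exp (((-(α*x + x*t + ω*t) : ℝ) : ℂ))))
      ((volume.restrict (Set.Ioi 0)).prod (volume.restrict (Set.Ioi 0))) := by
  have hg : Integrable (fun p : ℝ × ℝ =>
      (p.1 ^ (a.re - 1) * Real.exp (-(α * p.1))) * (p.2 ^ (c.re - 1) * Real.exp (-(ω * p.2))))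
      ((volume.restrict (Set.Ioi 0)).prod (volume.restrict (Set.Ioi 0))) :=
    (phi_aux_real_int ha hα).mul_prod (phi_aux_real_int hc hω)
  apply Integrable.mono' hg
  · rw [Measure.prod_restrict]
    refine ContinuousOn.aestronglyMeasurable ?_ (measurableSet_Ioi.prod measurableSet_Ioi)
    refine ContinuousOn.mul (ContinuousOn.mul ?_ ?_) ?_
    · exact (phi_contOn_cpow (a-1)).comp continuous_fst.continuousOn (fun p hp => hp.1)
    · exact (phi_contOn_cpow (c-1)).comp continuous_snd.continuousOn (fun p hp => hp.2)
    · exact (Complex.continuous_exp.comp (by fun_prop)).continuousOn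
  · rw [Measure.prod_restrict, ae_restrict_iff' (measurableSet_Ioi.prod measurableSet_Ioi)]
    filter_upwards with p hp
    obtain ⟨hx, ht⟩ := hp
    rw [Set.mem_Ioi] at hx ht
    rw [Function.uncurry, phi_norm3 hx ht]
    have h1 : Real.exp (-(α * p.1 + p.1 * p.2 + ω * p.2))
        ≤ Real.exp (-(α * p.1) + -(ω * p.2)) := by
      apply Real.exp_le_exp.mpr; nlinarith
    calc p.1 ^ (a - 1).re * p.2 ^ (c - 1).re * Real.exp (-(α * p.1 + p.1 * p.2 + ω * p.2))
        ≤ p.1 ^ (a - 1).re * p.2 ^ (c - 1).re * Real.exp (-(α * p.1) + -(ω * p.2)) := by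
          gcongr
      _ = p.1 ^ (a.re - 1) * Real.exp (-(α * p.1)) * (p.2 ^ (c.re - 1) * Real.exp (-(ω * p.2))) := by
          rw [Real.exp_add]; simp only [Complex.sub_re, Complex.one_re]; ring

lemma phi_cpow_neg_of_pos {r : ℝ} (hr : 0 < r) (u : ℂ) :
    (1 / (r : ℂ)) ^ u = ((r : ℝ) : ℂ) ^ (-u) := by
  rw [one_div, Complex.inv_cpow _ _ (by
    rw [Complex.arg_ofReal_of_nonneg hr.le]; exact Real.pi_ne_zero.symm), Complex.cpow_neg]

lemma phi_key (α ω : ℝ) (hα : 0 < α) (hω : 0 < ω) (a c : ℂ) (ha : 0 < a.re) (hc : 0 < c.re) :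
    Complex.Gamma a *
        (∫ t in Set.Ioi (0:ℝ), (t:ℂ)^(c-1) * ((t+α : ℝ):ℂ)^(-a) * Complex.exp (-(ω:ℂ)*t))
      = Complex.Gamma c * (ω:ℂ)^(a - c) *
        ∫ s in Set.Ioi (0:ℝ), (s:ℂ)^(a-1) * ((1+s : ℝ):ℂ)^(-c) *
          Complex.exp (-(α:ℂ)*(ω:ℂ)*s) := by
  set F : ℝ → ℝ → ℂ := fun x t => (x:ℂ)^(a-1) * (t:ℂ)^(c-1) *
      Complex.exp (((-(α*x + x*t + ω*t) : ℝ) : ℂ)) with hF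
  have hswap : (∫ x in Set.Ioi (0:ℝ), ∫ t in Set.Ioi (0:ℝ), F x t)
      = ∫ t in Set.Ioi (0:ℝ), ∫ x in Set.Ioi (0:ℝ), F x t :=
    integral_integral_swap (phi_prod_int hα hω ha hc)
  -- right side of hswap equals Gamma a * I₁
  have hR : (∫ t in Set.Ioi (0:ℝ), ∫ x in Set.Ioi (0:ℝ), F x t)
      = Complex.Gamma a *
        ∫ t in Set.Ioi (0:ℝ), (t:ℂ)^(c-1) * ((t+α : ℝ):ℂ)^(-a) * Complex.exp (-(ω:ℂ)*t) := by
    rw [← integral_const_mul]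
    refine setIntegral_congr_fun measurableSet_Ioi (fun t ht => ?_)
    rw [Set.mem_Ioi] at ht
    have hpt : ∀ x : ℝ, F x t
        = ((t:ℂ)^(c-1) * Complex.exp (-(ω:ℂ)*t)) *
          ((x:ℂ)^(a-1) * Complex.exp (-(((t+α : ℝ):ℂ) * x))) := by
      intro x
      show (x:ℂ)^(a-1) * (t:ℂ)^(c-1) * Complex.exp (((-(α*x + x*t + ω*t) : ℝ) : ℂ)) = _
      have : ((-(α*x + x*t + ω*t) : ℝ) : ℂ) = (-(ω:ℂ)*t) + (-(((t+α : ℝ):ℂ) * x)) := by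
        push_cast; ring
      rw [this, Complex.exp_add]; ring
    simp_rw [hpt]
    rw [integral_const_mul, integral_cpow_mul_exp_neg_mul_Ioi ha (by linarith : (0:ℝ) < t + α),
      phi_cpow_neg_of_pos (by linarith : (0:ℝ) < t + α)]
    ring
  -- left side of hswap equals Gamma c * K
  have hL : (∫ x in Set.Ioi (0:ℝ), ∫ t in Set.Ioi (0:ℝ), F x t)
      = Complex.Gamma c *
        ∫ x in Set.Ioi (0:ℝ), (x:ℂ)^(a-1) * ((x+ω : ℝ):ℂ)^(-c) *
          Complex.exp (((-(α*x) : ℝ) : ℂ)) := by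
    rw [← integral_const_mul]
    refine setIntegral_congr_fun measurableSet_Ioi (fun x hx => ?_)
    rw [Set.mem_Ioi] at hx
    have hpt : ∀ t : ℝ, F x t
        = ((x:ℂ)^(a-1) * Complex.exp (((-(α*x) : ℝ) : ℂ))) *
          ((t:ℂ)^(c-1) * Complex.exp (-(((x+ω : ℝ):ℂ) * t))) := by
      intro t
      show (x:ℂ)^(a-1) * (t:ℂ)^(c-1) * Complex.exp (((-(α*x + x*t + ω*t) : ℝ) : ℂ)) = _
      have : ((-(α*x + x*t + ω*t) : ℝ) : ℂ)
          = (((-(α*x) : ℝ) : ℂ)) + (-(((x+ω : ℝ):ℂ) * t)) := by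
        push_cast; ring
      rw [this, Complex.exp_add]; ring
    simp_rw [hpt]
    rw [integral_const_mul, integral_cpow_mul_exp_neg_mul_Ioi hc (by linarith : (0:ℝ) < x + ω),
      phi_cpow_neg_of_pos (by linarith : (0:ℝ) < x + ω)]
    ring
  -- substitution x = ω s in K
  have hsub : (∫ x in Set.Ioi (0:ℝ), (x:ℂ)^(a-1) * ((x+ω : ℝ):ℂ)^(-c) *
        Complex.exp (((-(α*x) : ℝ) : ℂ)))
      = (ω:ℂ)^(a - c) *
        ∫ s in Set.Ioi (0:ℝ), (s:ℂ)^(a-1) * ((1+s : ℝ):ℂ)^(-c) *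
          Complex.exp (-(α:ℂ)*(ω:ℂ)*s) := by
    have h0 := integral_comp_mul_left_Ioi
      (fun x : ℝ => (x:ℂ)^(a-1) * ((x+ω : ℝ):ℂ)^(-c) * Complex.exp (((-(α*x) : ℝ) : ℂ))) 0 hω
    rw [mul_zero] at h0
    have hωne : (ω:ℂ) ≠ 0 := Complex.ofReal_ne_zero.mpr hω.ne'
    have h1 : (∫ x in Set.Ioi (0:ℝ), (x:ℂ)^(a-1) * ((x+ω : ℝ):ℂ)^(-c) *
          Complex.exp (((-(α*x) : ℝ) : ℂ)))
        = ω • ∫ x in Set.Ioi (0:ℝ), ((ω*x : ℝ):ℂ)^(a-1) * ((ω*x+ω : ℝ):ℂ)^(-c) *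
          Complex.exp (((-(α*(ω*x)) : ℝ) : ℂ)) := by
      rw [h0, smul_smul, mul_inv_cancel₀ hω.ne', one_smul]
    rw [h1]
    have hpt : ∀ s ∈ Set.Ioi (0:ℝ), ((ω*s : ℝ):ℂ)^(a-1) * ((ω*s+ω : ℝ):ℂ)^(-c) *
          Complex.exp (((-(α*(ω*s)) : ℝ) : ℂ))
        = ((ω:ℂ)^(a-1) * (ω:ℂ)^(-c)) *
          ((s:ℂ)^(a-1) * ((1+s : ℝ):ℂ)^(-c) * Complex.exp (-(α:ℂ)*(ω:ℂ)*s)) := by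
      intro s hs
      rw [Set.mem_Ioi] at hs
      rw [Complex.ofReal_mul, Complex.mul_cpow_ofReal_nonneg hω.le hs.le,
        show ω*s+ω = ω*(1+s) by ring, Complex.ofReal_mul,
        Complex.mul_cpow_ofReal_nonneg hω.le (by linarith : (0:ℝ) ≤ 1 + s),
        show ((-(α*(ω*s)) : ℝ) : ℂ) = -(α:ℂ)*(ω:ℂ)*s by push_cast; ring]
      ring
    rw [setIntegral_congr_fun measurableSet_Ioi hpt, integral_const_mul, Complex.real_smul,
      ← mul_assoc]
    congr 1
    rw [show (ω:ℂ) * ((ω:ℂ)^(a-1) * (ω:ℂ)^(-c)) = (ω:ℂ)^(1:ℂ) * (ω:ℂ)^(a-1) * (ω:ℂ)^(-c) by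
        rw [Complex.cpow_one]; ring,
      ← Complex.cpow_add _ _ hωne, ← Complex.cpow_add _ _ hωne]
    congr 1
    ring
  rw [hR] at hswap
  rw [hL, hsub] at hswap
  rw [← hswap]; ring

/-- For α, ω > 0, Re a > 0, Re b > 0 and n ∈ ℕ,
(1/Γ(b)) ∫_0^∞ t^{n+b-1} (t+α)^{-a} e^{-ωt} dt
 = ((b)_n ω^{a-n-b} / Γ(a)) ∫_0^∞ s^{a-1} (1+s)^{-n-b} e^{-αωs} ds,
with both integrals absolutely convergent. -/
theorem Phi_two_integral_representations (α ω : ℝ) (hα : 0 < α) (hω : 0 < ω)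
    (a b : ℂ) (ha : 0 < a.re) (hb : 0 < b.re) (n : ℕ) :
    IntegrableOn
      (fun t : ℝ => (t : ℂ) ^ ((n : ℂ) + b - 1) * ((t + α : ℝ) : ℂ) ^ (-a) *
        Complex.exp (-(ω : ℂ) * t)) (Set.Ioi 0) ∧
    IntegrableOn
      (fun s : ℝ => (s : ℂ) ^ (a - 1) * ((1 + s : ℝ) : ℂ) ^ (-(n : ℂ) - b) *
        Complex.exp (-(α : ℂ) * (ω : ℂ) * s)) (Set.Ioi 0) ∧
    (1 / Complex.Gamma b) *
        (∫ t in Set.Ioi (0:ℝ),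
          (t : ℂ) ^ ((n : ℂ) + b - 1) * ((t + α : ℝ) : ℂ) ^ (-a) *
            Complex.exp (-(ω : ℂ) * t)) =
      ((∏ j ∈ Finset.range n, (b + j)) * (ω : ℂ) ^ (a - (n : ℂ) - b) / Complex.Gamma a) *
        ∫ s in Set.Ioi (0:ℝ),
          (s : ℂ) ^ (a - 1) * ((1 + s : ℝ) : ℂ) ^ (-(n : ℂ) - b) *
            Complex.exp (-(α : ℂ) * (ω : ℂ) * s) := by
  have hc : 0 < ((n : ℂ) + b).re := by
    have : ((n : ℂ) + b).re = (n : ℝ) + b.re := by simp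
    rw [this]
    have : (0:ℝ) ≤ (n:ℝ) := Nat.cast_nonneg n
    linarith
  have e1 : -(n:ℂ) - b = -((n:ℂ) + b) := by ring
  have e2 : a - (n:ℂ) - b = a - ((n:ℂ) + b) := by ring
  refine ⟨phi_int1 hα hω ha hc, ?_, ?_⟩
  · have hfun : (fun s : ℝ => (s:ℂ)^(a-1) * ((1+s : ℝ):ℂ)^(-(n:ℂ)-b) *
        Complex.exp (-(α:ℂ)*(ω:ℂ)*s))
        = (fun s : ℝ => (s:ℂ)^(a-1) * ((1+s : ℝ):ℂ)^(-((n:ℂ)+b)) *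
          Complex.exp (-((α*ω : ℝ):ℂ)*s)) := by
      funext s
      rw [e1, show -(α:ℂ)*(ω:ℂ)*(s:ℂ) = -((α*ω : ℝ):ℂ)*s by push_cast; ring]
    rw [hfun]
    exact phi_int2 (mul_pos hα hω) ha hc
  · simp only [e1, e2]
    have hΓa : Complex.Gamma a ≠ 0 := Complex.Gamma_ne_zero_of_re_pos ha
    have hΓb : Complex.Gamma b ≠ 0 := Complex.Gamma_ne_zero_of_re_pos hb
    have hGc : Complex.Gamma ((n:ℂ)+b) = (∏ j ∈ Finset.range n, (b + j)) * Complex.Gamma b := by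
      rw [add_comm]; exact phi_Gamma_add_nat b hb n
    have key := phi_key α ω hα hω a ((n:ℂ)+b) ha hc
    have hIa : (∫ t in Set.Ioi (0:ℝ),
          (t : ℂ) ^ ((n : ℂ) + b - 1) * ((t + α : ℝ) : ℂ) ^ (-a) *
            Complex.exp (-(ω : ℂ) * t))
        = ((∏ j ∈ Finset.range n, (b + j)) * Complex.Gamma b * (ω:ℂ)^(a-((n:ℂ)+b)) *
          ∫ s in Set.Ioi (0:ℝ),
            (s : ℂ) ^ (a - 1) * ((1 + s : ℝ) : ℂ) ^ (-((n : ℂ) + b)) *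
              Complex.exp (-(α : ℂ) * (ω : ℂ) * s)) / Complex.Gamma a := by
      rw [eq_div_iff hΓa, ← hGc]
      linear_combination key
    rw [hIa]
    field_simp
end

section
/- Let a, b be complex numbers with Re a > 0 and Re b > 0, and let n be a natural number with n > Re a − Re b. Then for all real ω > 0 and all real α > 0, the quantity Φ_n = (1/Γ(b)) ∫_0^∞ t^{n+b-1} (t+α)^{-a} e^{-ω t} dt satisfies the bound |Φ_n| ≤ ( |(b)_n| / |Γ(a)| ) · B(Re a, n + Re b − Re a) · ω^{Re a − n − Re b}, where B denotes the real Beta function. In particular Φ_n = O(ω^{Re a − n − Re b}) as ω → ∞, uniformly with respect to α > 0. -/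
open MeasureTheory Set Complex Finset

/-- The real Beta function B(p,q) = ∫_0^∞ s^{p-1}(1+s)^{-p-q} ds. -/
noncomputable def realBeta (p q : ℝ) : ℝ :=
  ∫ s in Set.Ioi (0:ℝ), s ^ (p - 1) * (1 + s) ^ (-p - q)

lemma my_norm_cpow {x : ℝ} (hx : 0 < x) (s : ℂ) : ‖(x:ℂ) ^ s‖ = x ^ s.re := by
  rw [Complex.norm_cpow_eq_rpow_re_of_pos hx]

lemma my_one_div_cpow {x : ℝ} (hx : 0 < x) (s : ℂ) :
    (1 / (x:ℂ)) ^ s = (x:ℂ) ^ (-s) := by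
  rw [one_div, Complex.inv_cpow _ _ (by
    rw [Complex.arg_ofReal_of_nonneg hx.le]; exact Real.pi_ne_zero.symm),
    ← Complex.cpow_neg]

lemma my_gamma_integrable {s r : ℝ} (hs : 0 < s) (hr : 0 < r) :
    IntegrableOn (fun t : ℝ => t ^ (s - 1) * Real.exp (-(r * t))) (Ioi 0) := by
  have h0 : IntegrableOn (fun x : ℝ => Real.exp (-x) * x ^ (s - 1)) (Ioi 0) :=
    Real.GammaIntegral_convergent hs
  have h1 : IntegrableOn (fun t : ℝ => Real.exp (-(r * t)) * (r * t) ^ (s - 1)) (Ioi 0) := by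
    have := (integrableOn_Ioi_comp_mul_left_iff
      (fun x : ℝ => Real.exp (-x) * x ^ (s - 1)) 0 hr).mpr (by simpa using h0)
    simpa using this
  have h2 : IntegrableOn
      (fun t : ℝ => ((r : ℝ) ^ (s - 1))⁻¹ * (Real.exp (-(r * t)) * (r * t) ^ (s - 1)))
      (Ioi 0) := h1.const_mul _
  refine IntegrableOn.congr_fun h2 (fun t ht => ?_) measurableSet_Ioi
  rw [Set.mem_Ioi] at ht
  rw [Real.mul_rpow hr.le ht.le]
  field_simp [(Real.rpow_pos_of_pos hr (s-1)).ne']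

lemma my_beta_integrable {p q w : ℝ} (hp : 0 < p) (hq : 0 < q) (hw : 0 < w) :
    IntegrableOn (fun u : ℝ => u ^ (p - 1) * (w + u) ^ (-(p + q))) (Ioi 0) := by
  have hcont : ContinuousOn (fun u : ℝ => u ^ (p - 1) * (w + u) ^ (-(p + q))) (Ioi 0) := by
    intro x hx
    rw [Set.mem_Ioi] at hx
    apply ContinuousWithinAt.mul
    · exact (continuousAt_id.rpow_const (Or.inl hx.ne')).continuousWithinAt
    · exact ((continuousAt_const.add continuousAt_id).rpow_const
        (Or.inl (ne_of_gt (by show (0:ℝ) < w + x; linarith)))).continuousWithinAt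
  rw [← Ioc_union_Ioi_eq_Ioi (zero_le_one (α := ℝ)), integrableOn_union]
  constructor
  · have hint : IntegrableOn (fun u : ℝ => w ^ (-(p + q)) * u ^ (p - 1)) (Ioc 0 1) := by
      refine Integrable.const_mul ?_ _
      exact (intervalIntegral.intervalIntegrable_rpow' (by linarith)).1
    refine Integrable.mono hint
      ((hcont.mono Ioc_subset_Ioi_self).aestronglyMeasurable measurableSet_Ioc) ?_
    filter_upwards [ae_restrict_mem measurableSet_Ioc] with u hu
    have hu0 : 0 < u := hu.1
    simp only [Real.norm_eq_abs]
    rw [_root_.abs_of_nonneg (show (0:ℝ) ≤ u ^ (p - 1) * (w + u) ^ (-(p + q)) by positivity),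
      _root_.abs_of_nonneg (show (0:ℝ) ≤ w ^ (-(p + q)) * u ^ (p - 1) by positivity),
      mul_comm (w ^ (-(p+q)))]
    refine mul_le_mul_of_nonneg_left ?_ (by positivity)
    exact Real.rpow_le_rpow_of_nonpos hw (by linarith [hu0.le]) (by linarith)
  · have hint : IntegrableOn (fun u : ℝ => u ^ (-q - 1)) (Ioi 1) :=
      integrableOn_Ioi_rpow_of_lt (by linarith) one_pos
    refine Integrable.mono hint
      ((hcont.mono (Ioi_subset_Ioi zero_le_one)).aestronglyMeasurable measurableSet_Ioi) ?_
    filter_upwards [ae_restrict_mem measurableSet_Ioi] with u hu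
    rw [Set.mem_Ioi] at hu
    have hu0 : (0:ℝ) < u := lt_trans one_pos hu
    simp only [Real.norm_eq_abs]
    rw [_root_.abs_of_nonneg (show (0:ℝ) ≤ u ^ (p - 1) * (w + u) ^ (-(p + q)) by positivity),
      _root_.abs_of_nonneg (show (0:ℝ) ≤ u ^ (-q - 1) by positivity)]
    calc u ^ (p - 1) * (w + u) ^ (-(p + q)) ≤ u ^ (p - 1) * u ^ (-(p + q)) := by
          refine mul_le_mul_of_nonneg_left ?_ (by positivity)
          exact Real.rpow_le_rpow_of_nonpos hu0 (by linarith) (by linarith)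
      _ = u ^ (-q - 1) := by rw [← Real.rpow_add hu0]; ring_nf

lemma my_beta_subst {p q w : ℝ} (hp : 0 < p) (hq : 0 < q) (hw : 0 < w) :
    ∫ u in Ioi (0:ℝ), u ^ (p - 1) * (w + u) ^ (-(p + q))
      = w ^ (-q) * realBeta p q := by
  have h := integral_comp_mul_left_Ioi
    (fun u : ℝ => u ^ (p - 1) * (w + u) ^ (-(p + q))) 0 hw
  rw [mul_zero] at h
  have h2 : (∫ s in Ioi (0:ℝ),
      (fun u : ℝ => u ^ (p - 1) * (w + u) ^ (-(p + q))) (w * s))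
      = w ^ (p - 1) * w ^ (-(p + q)) * realBeta p q := by
    rw [realBeta, ← integral_const_mul]
    refine setIntegral_congr_fun measurableSet_Ioi (fun s hs => ?_)
    rw [Set.mem_Ioi] at hs
    have h3 : w + w * s = w * (1 + s) := by ring
    simp only
    rw [h3, Real.mul_rpow hw.le hs.le, Real.mul_rpow hw.le (by linarith)]
    have h4 : -p - q = -(p + q) := by ring
    rw [h4]; ring
  have h5 : (∫ u in Ioi (0:ℝ), u ^ (p - 1) * (w + u) ^ (-(p + q)))
      = w * (w ^ (p - 1) * w ^ (-(p + q)) * realBeta p q) := by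
    rw [← h2, h, smul_eq_mul, ← mul_assoc, mul_inv_cancel₀ hw.ne', one_mul]
  rw [h5]
  have h6 : w * (w ^ (p - 1) * w ^ (-(p + q))) = w ^ (-q) := by
    calc w * (w ^ (p - 1) * w ^ (-(p + q)))
        = w ^ (1:ℝ) * (w ^ (p - 1) * w ^ (-(p + q))) := by rw [Real.rpow_one]
      _ = w ^ ((1:ℝ) + ((p - 1) + -(p + q))) := by
          rw [Real.rpow_add hw, Real.rpow_add hw]
      _ = w ^ (-q) := by congr 1; ring
  rw [← mul_assoc, h6]

lemma my_gamma_prod (b : ℂ) (hb : 0 < b.re) (n : ℕ) :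
    Complex.Gamma ((n : ℂ) + b) = (∏ j ∈ Finset.range n, (b + j)) * Complex.Gamma b := by
  induction n with
  | zero => simp
  | succ m ih =>
    have hne : (m : ℂ) + b ≠ 0 := by
      intro h
      have h2 : ((m : ℂ) + b).re = 0 := by rw [h]; simp
      simp only [Complex.add_re, Complex.natCast_re] at h2
      have h3 : (0:ℝ) ≤ (m:ℝ) := Nat.cast_nonneg m
      linarith
    have hstep : ((m + 1 : ℕ) : ℂ) + b = ((m : ℂ) + b) + 1 := by push_cast; ring
    rw [hstep, Complex.Gamma_add_one _ hne, ih, Finset.prod_range_succ]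
    push_cast
    ring

lemma my_norm_exp (x : ℝ) : ‖Complex.exp (-(x:ℂ))‖ = Real.exp (-x) := by
  rw [Complex.norm_exp]
  simp



/-- For Re a > 0, Re b > 0 and n > Re a − Re b, for all ω > 0 and α > 0,
|Φ_n| ≤ (|(b)_n| / |Γ(a)|) · B(Re a, n + Re b − Re a) · ω^{Re a − n − Re b};
in particular Φ_n = O(ω^{Re a − n − Re b}) as ω → ∞, uniformly in α. -/
theorem Phi_uniform_bound (a b : ℂ) (ha : 0 < a.re) (hb : 0 < b.re)
    (n : ℕ) (hn : a.re - b.re < (n : ℝ)) :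
    ∀ ω : ℝ, 0 < ω → ∀ α : ℝ, 0 < α →
      ‖(1 / Complex.Gamma b) *
          ∫ t in Set.Ioi (0:ℝ),
            (t : ℂ) ^ ((n : ℂ) + b - 1) * ((t + α : ℝ) : ℂ) ^ (-a) *
              Complex.exp (-(ω : ℂ) * t)‖ ≤
        (‖∏ j ∈ Finset.range n, (b + j)‖ / ‖Complex.Gamma a‖) *
          realBeta a.re ((n : ℝ) + b.re - a.re) * ω ^ (a.re - (n : ℝ) - b.re) := by
  intro ω hω α hα
  have hn0 : (0:ℝ) ≤ (n:ℝ) := Nat.cast_nonneg n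
  set c : ℂ := (n : ℂ) + b with hc
  have hcre : c.re = (n:ℝ) + b.re := by simp [hc]
  have hcre0 : 0 < c.re := by rw [hcre]; linarith
  set q : ℝ := (n : ℝ) + b.re - a.re with hqdef
  have hq : 0 < q := by rw [hqdef]; linarith
  set f : ℝ → ℝ → ℂ := fun t u =>
    (t:ℂ) ^ (c - 1) * (u:ℂ) ^ (a - 1) *
      Complex.exp (-((ω * t + (t + α) * u : ℝ) : ℂ)) with hf
  set I : ℂ := ∫ t in Set.Ioi (0:ℝ),
      (t : ℂ) ^ (c - 1) * ((t + α : ℝ) : ℂ) ^ (-a) * Complex.exp (-(ω : ℂ) * t) with hI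
  set J : ℂ := ∫ u in Set.Ioi (0:ℝ),
      (u:ℂ) ^ (a - 1) * ((ω + u : ℝ) : ℂ) ^ (-c) * Complex.exp (-((α * u : ℝ) : ℂ)) with hJ
  -- measurability of uncurry f
  have hmeasf : AEStronglyMeasurable (Function.uncurry f)
      ((volume.restrict (Ioi 0)).prod (volume.restrict (Ioi 0))) := by
    rw [Measure.prod_restrict]
    refine ContinuousOn.aestronglyMeasurable ?_ (measurableSet_Ioi.prod measurableSet_Ioi)
    intro x hx
    obtain ⟨hx1, hx2⟩ := hx
    rw [Set.mem_Ioi] at hx1 hx2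
    refine ContinuousWithinAt.mul (ContinuousWithinAt.mul ?_ ?_) ?_
    · exact (((continuousAt_cpow_const
        (Complex.ofReal_mem_slitPlane.mpr hx1)).comp
        (Complex.continuous_ofReal.continuousAt)).comp
        continuousAt_fst).continuousWithinAt
    · exact (((continuousAt_cpow_const
        (Complex.ofReal_mem_slitPlane.mpr hx2)).comp
        (Complex.continuous_ofReal.continuousAt)).comp
        continuousAt_snd).continuousWithinAt
    · refine Continuous.continuousWithinAt ?_
      exact Complex.continuous_exp.comp
        ((Complex.continuous_ofReal.comp (by fun_prop)).neg)
  -- integrability of uncurry f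
  have hfint : Integrable (Function.uncurry f)
      ((volume.restrict (Ioi 0)).prod (volume.restrict (Ioi 0))) := by
    have hmaj : Integrable (fun z : ℝ × ℝ =>
        (z.1 ^ ((n:ℝ) + b.re - 1) * Real.exp (-(ω * z.1))) *
        (z.2 ^ (a.re - 1) * Real.exp (-(α * z.2))))
        ((volume.restrict (Ioi 0)).prod (volume.restrict (Ioi 0))) :=
      Integrable.mul_prod (my_gamma_integrable (by linarith) hω)
        (my_gamma_integrable ha hα)
    refine hmaj.mono hmeasf ?_
    rw [Measure.prod_restrict]
    refine (ae_restrict_iff' (measurableSet_Ioi.prod measurableSet_Ioi)).mpr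
      (Filter.Eventually.of_forall ?_)
    rintro ⟨t, u⟩ ⟨ht, hu⟩
    rw [Set.mem_Ioi] at ht hu
    have h1 : Function.uncurry f (t, u) = f t u := rfl
    rw [h1, hf]
    simp only
    rw [norm_mul, norm_mul, my_norm_cpow ht, my_norm_cpow hu, my_norm_exp]
    have hc1 : (c - 1).re = (n:ℝ) + b.re - 1 := by
      rw [Complex.sub_re, hcre, Complex.one_re]
    have ha1 : (a - 1).re = a.re - 1 := by rw [Complex.sub_re, Complex.one_re]
    rw [hc1, ha1, Real.norm_eq_abs, _root_.abs_of_nonneg (by positivity)]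
    have hexp : Real.exp (-(ω * t + (t + α) * u)) ≤ Real.exp (-(ω * t)) * Real.exp (-(α * u)) := by
      rw [← Real.exp_add]
      refine Real.exp_le_exp.mpr ?_
      nlinarith
    calc t ^ ((n:ℝ) + b.re - 1) * u ^ (a.re - 1) * Real.exp (-(ω * t + (t + α) * u))
        ≤ t ^ ((n:ℝ) + b.re - 1) * u ^ (a.re - 1) *
          (Real.exp (-(ω * t)) * Real.exp (-(α * u))) := by
          refine mul_le_mul_of_nonneg_left hexp (by positivity)
      _ = t ^ ((n:ℝ) + b.re - 1) * Real.exp (-(ω * t)) *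
          (u ^ (a.re - 1) * Real.exp (-(α * u))) := by ring
  -- Step B
  have hB : Complex.Gamma a * I = ∫ t in Set.Ioi (0:ℝ), ∫ u in Set.Ioi (0:ℝ), f t u := by
    rw [hI, ← integral_const_mul]
    refine (setIntegral_congr_fun measurableSet_Ioi (fun t ht => ?_)).symm
    rw [Set.mem_Ioi] at ht
    have key := Complex.integral_cpow_mul_exp_neg_mul_Ioi ha
      (show (0:ℝ) < t + α by linarith)
    have h2 : (∫ u in Set.Ioi (0:ℝ), f t u)
        = ((t:ℂ) ^ (c - 1) * Complex.exp (-((ω * t : ℝ) : ℂ))) *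
          ∫ u in Set.Ioi (0:ℝ), (u:ℂ) ^ (a - 1) *
            Complex.exp (-((((t + α : ℝ)) : ℂ) * u)) := by
      rw [← integral_const_mul]
      refine setIntegral_congr_fun measurableSet_Ioi (fun u hu => ?_)
      rw [hf]
      simp only
      have he : Complex.exp (-((ω * t + (t + α) * u : ℝ) : ℂ))
          = Complex.exp (-((ω * t : ℝ) : ℂ)) *
            Complex.exp (-((((t + α : ℝ)) : ℂ) * u)) := by
        rw [← Complex.exp_add]
        congr 1
        push_cast
        ring
      rw [he]
      ring
    rw [h2, key, my_one_div_cpow (by linarith) a]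
    have he2 : Complex.exp (-(ω : ℂ) * (t:ℂ)) = Complex.exp (-((ω * t : ℝ) : ℂ)) := by
      congr 1
      push_cast
      ring
    rw [he2]
    ring
  -- Step C + D
  have hD : (∫ u in Set.Ioi (0:ℝ), ∫ t in Set.Ioi (0:ℝ), f t u) = Complex.Gamma c * J := by
    rw [hJ, ← integral_const_mul]
    refine setIntegral_congr_fun measurableSet_Ioi (fun u hu => ?_)
    rw [Set.mem_Ioi] at hu
    have key := Complex.integral_cpow_mul_exp_neg_mul_Ioi hcre0
      (show (0:ℝ) < ω + u by linarith)
    have h2 : (∫ t in Set.Ioi (0:ℝ), f t u)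
        = ((u:ℂ) ^ (a - 1) * Complex.exp (-((α * u : ℝ) : ℂ))) *
          ∫ t in Set.Ioi (0:ℝ), (t:ℂ) ^ (c - 1) *
            Complex.exp (-((((ω + u : ℝ)) : ℂ) * t)) := by
      rw [← integral_const_mul]
      refine setIntegral_congr_fun measurableSet_Ioi (fun t ht => ?_)
      rw [hf]
      simp only
      have he : Complex.exp (-((ω * t + (t + α) * u : ℝ) : ℂ))
          = Complex.exp (-((α * u : ℝ) : ℂ)) *
            Complex.exp (-((((ω + u : ℝ)) : ℂ) * t)) := by
        rw [← Complex.exp_add]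
        congr 1
        push_cast
        ring
      rw [he]
      ring
    rw [h2, key, my_one_div_cpow (by linarith) c]
    ring
  have hE : Complex.Gamma a * I = Complex.Gamma c * J := by
    rw [hB, MeasureTheory.integral_integral_swap hfint, hD]
  -- Step F : norm bound on J
  have hJb : ‖J‖ ≤ ω ^ (-q) * realBeta a.re q := by
    rw [← my_beta_subst ha hq hω, hJ]
    refine norm_integral_le_of_norm_le (my_beta_integrable ha hq hω) ?_
    filter_upwards [ae_restrict_mem measurableSet_Ioi] with u hu
    rw [Set.mem_Ioi] at hu
    rw [norm_mul, norm_mul, my_norm_cpow hu, my_norm_cpow (by linarith), my_norm_exp]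
    have ha1 : (a - 1).re = a.re - 1 := by rw [Complex.sub_re, Complex.one_re]
    have hc2 : (-c).re = -(a.re + q) := by
      rw [Complex.neg_re, hcre, hqdef]
      ring
    rw [ha1, hc2]
    calc u ^ (a.re - 1) * (ω + u) ^ (-(a.re + q)) * Real.exp (-(α * u))
        ≤ u ^ (a.re - 1) * (ω + u) ^ (-(a.re + q)) * 1 := by
          refine mul_le_mul_of_nonneg_left ?_ (by positivity)
          exact Real.exp_le_one_iff.mpr (by nlinarith)
      _ = u ^ (a.re - 1) * (ω + u) ^ (-(a.re + q)) := by ring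
  -- assemble
  have hGa : Complex.Gamma a ≠ 0 := Complex.Gamma_ne_zero_of_re_pos ha
  have hGb : Complex.Gamma b ≠ 0 := Complex.Gamma_ne_zero_of_re_pos hb
  have hGa0 : 0 < ‖Complex.Gamma a‖ := norm_pos_iff.mpr hGa
  have hGb0 : 0 < ‖Complex.Gamma b‖ := norm_pos_iff.mpr hGb
  set P : ℂ := ∏ j ∈ Finset.range n, (b + j) with hP
  have hGc : Complex.Gamma c = P * Complex.Gamma b := by
    rw [hP]; exact my_gamma_prod b hb n
  have h := congrArg norm hE
  rw [norm_mul, norm_mul, hGc, norm_mul] at h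
  have hIval : ‖I‖ = ‖P‖ * ‖Complex.Gamma b‖ * ‖J‖ / ‖Complex.Gamma a‖ := by
    rw [← h, mul_comm, mul_div_assoc, div_self hGa0.ne', mul_one]
  have hexp2 : a.re - (n:ℝ) - b.re = -q := by rw [hqdef]; ring
  rw [norm_mul, norm_div, norm_one, hIval, hexp2]
  have hBnn : 0 ≤ realBeta a.re q := by
    rw [realBeta]
    refine setIntegral_nonneg measurableSet_Ioi (fun s hs => ?_)
    rw [Set.mem_Ioi] at hs
    positivity
  calc (1 / ‖Complex.Gamma b‖) * (‖P‖ * ‖Complex.Gamma b‖ * ‖J‖ / ‖Complex.Gamma a‖)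
      = ‖P‖ / ‖Complex.Gamma a‖ * ‖J‖ := by
        rw [show (1 / ‖Complex.Gamma b‖) * (‖P‖ * ‖Complex.Gamma b‖ * ‖J‖ / ‖Complex.Gamma a‖)
            = (‖Complex.Gamma b‖ / ‖Complex.Gamma b‖) * (‖P‖ / ‖Complex.Gamma a‖ * ‖J‖) from by
          ring, div_self hGb0.ne', one_mul]
    _ ≤ ‖P‖ / ‖Complex.Gamma a‖ * (ω ^ (-q) * realBeta a.re q) := by
        refine mul_le_mul_of_nonneg_left hJb (by positivity)
    _ = ‖P‖ / ‖Complex.Gamma a‖ * realBeta a.re q * ω ^ (-q) := by ring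
end

section
/- Let z > 0 be real, set α = ln((z+1)/z), and define h : [0,∞) → ℝ by h(0) = 1 and, for t > 0, h(t) = ((1−e^{−t})/t) · ((e^t − e^{−α})/(t+α)) · (α/(1−e^{−α})). Then h is differentiable from the right at t = 0 with right derivative h′(0) = z + 1/2 − 1/α. Consequently, for any real b, the function f(t) = h(t)^{b} (with f(0)=1) has right derivative at 0 equal to f₁ = (b/(2d)) (2 d z + d − 2 z), where d = z α. (This is the first Taylor coefficient f₁ of the expansion f(t) = ∑ f_k t^k used in the Kummer-function expansion of the conical function.) -/
open Set

lemma E_deriv :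
    HasDerivAt (fun t : ℝ => if t = 0 then 1 else (1 - Real.exp (-t)) / t) (-(1/2)) 0 := by
  rw [hasDerivAt_iff_isLittleO]
  simp only [sub_zero, smul_eq_mul, if_pos rfl]
  have hbig : (fun t : ℝ => (if t = 0 then (1:ℝ) else (1 - Real.exp (-t)) / t) - 1 - t * (-(1/2)))
      =O[nhds (0:ℝ)] fun t => t * t := by
    rw [Asymptotics.isBigO_iff]
    refine ⟨1, ?_⟩
    filter_upwards [Metric.ball_mem_nhds (0:ℝ) one_pos] with t ht
    rw [Metric.mem_ball, Real.dist_eq, sub_zero] at ht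
    by_cases h0 : t = 0
    · simp [h0]
    · rw [if_neg h0]
      have habs : |(-t : ℝ)| ≤ 1 := by rw [abs_neg]; exact ht.le
      have hb := Real.exp_bound habs (n := 3) (by norm_num)
      have hsum : ∑ i ∈ Finset.range 3, (-t) ^ i / (i.factorial : ℝ)
          = 1 - t + t ^ 2 / 2 := by
        simp [Finset.sum_range_succ]
        ring
      rw [hsum] at hb
      have hb' : |Real.exp (-t) - (1 - t + t ^ 2 / 2)| ≤ |t| ^ 3 * (2 / 9) := by
        calc |Real.exp (-t) - (1 - t + t ^ 2 / 2)| ≤ |(-t)| ^ 3 * (Nat.succ 3 / ((Nat.factorial 3 : ℝ) * 3)) := hb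
        _ = |t| ^ 3 * (2 / 9) := by rw [abs_neg]; norm_num [Nat.factorial]
      have ht0 : |t| ≠ 0 := abs_ne_zero.mpr h0
      have key : (1 - Real.exp (-t)) / t - 1 - t * (-(1/2))
          = -(Real.exp (-t) - (1 - t + t ^ 2 / 2)) / t := by
        field_simp
        ring
      simp only [Real.norm_eq_abs]
      rw [key, abs_div, abs_neg]
      rw [one_mul]
      rw [abs_mul]
      rw [div_le_iff₀ (abs_pos.mpr h0)]
      calc |Real.exp (-t) - (1 - t + t ^ 2 / 2)| ≤ |t| ^ 3 * (2 / 9) := hb'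
        _ ≤ |t| * |t| * |t| := by
            have h3 : |t| ^ 3 = |t| * |t| * |t| := by ring
            rw [h3]
            nlinarith [abs_nonneg t]
  have hlit : (fun t : ℝ => t * t) =o[nhds (0:ℝ)] fun t => t := by
    have h1 : (fun t : ℝ => t) =o[nhds (0:ℝ)] (fun _ => (1:ℝ)) :=
      (Asymptotics.isLittleO_one_iff ℝ).mpr (by simpa using continuous_id'.tendsto (0:ℝ))
    simpa using h1.mul_isBigO (Asymptotics.isBigO_refl (fun t : ℝ => t) (nhds 0))
  exact hbig.trans_isLittleO hlit

/-- With z > 0, α = ln((z+1)/z), and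
h(t) = ((1−e^{−t})/t)·((e^t − e^{−α})/(t+α))·(α/(1−e^{−α})) for t > 0, h(0) = 1,
the function h has right derivative z + 1/2 − 1/α at 0, and consequently for any b,
f = h^b has right derivative f₁ = (b/(2d))(2dz + d − 2z) at 0, where d = zα. -/
theorem h_right_derivative_at_zero (z : ℝ) (hz : 0 < z) (α : ℝ)
    (hα : α = Real.log ((z + 1) / z)) (d : ℝ) (hd : d = z * α) (h : ℝ → ℝ)
    (h0 : h 0 = 1)
    (hpos : ∀ t : ℝ, 0 < t →
      h t = ((1 - Real.exp (-t)) / t) * ((Real.exp t - Real.exp (-α)) / (t + α)) *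
        (α / (1 - Real.exp (-α)))) :
    HasDerivWithinAt h (z + 1/2 - 1/α) (Set.Ici 0) 0 ∧
    ∀ b : ℝ, HasDerivWithinAt (fun t => h t ^ b)
      (b / (2 * d) * (2 * d * z + d - 2 * z)) (Set.Ici 0) 0 := by
  have hz1 : (0:ℝ) < z + 1 := by linarith
  have hαpos : 0 < α := by
    rw [hα]; apply Real.log_pos; rw [lt_div_iff₀ hz]; linarith
  have hexpα : Real.exp (-α) = z / (z + 1) := by
    rw [hα, Real.exp_neg, Real.exp_log (by positivity), inv_div]
  have h1e : 1 - Real.exp (-α) = 1 / (z + 1) := by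
    rw [hexpα]; field_simp; ring
  have h1epos : 0 < 1 - Real.exp (-α) := by rw [h1e]; positivity
  set E : ℝ → ℝ := fun t => if t = 0 then 1 else (1 - Real.exp (-t)) / t with hE
  set G : ℝ → ℝ := fun t =>
    E t * ((Real.exp t - Real.exp (-α)) / (t + α)) * (α / (1 - Real.exp (-α))) with hG
  have hBd : HasDerivAt (fun t => (Real.exp t - Real.exp (-α)) / (t + α))
      ((Real.exp 0 * (0 + α) - (Real.exp 0 - Real.exp (-α)) * 1) / (0 + α) ^ 2) 0 := by
    exact ((Real.hasDerivAt_exp 0).sub_const _).div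
      (((hasDerivAt_id 0).add_const α)) (by simpa using hαpos.ne')
  have hGd : HasDerivAt G (z + 1/2 - 1/α) 0 := by
    have hEd : HasDerivAt E (-(1/2)) 0 := E_deriv
    have := (hEd.mul hBd).mul_const (α / (1 - Real.exp (-α)))
    refine this.congr_deriv ?_; symm
    have hE0 : E 0 = 1 := by simp [hE]
    rw [hE0]
    rw [Real.exp_zero, h1e]
    have hz1' : (z + 1 : ℝ) ≠ 0 := hz1.ne'
    field_simp
    ring
  have hG0 : G 0 = 1 := by
    have hE0 : E 0 = 1 := by simp [hE]
    simp only [hG, hE0, Real.exp_zero, zero_add, one_mul]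
    field_simp
  have heq : Set.EqOn h G (Set.Ici 0) := by
    intro t ht
    rcases eq_or_lt_of_le (mem_Ici.mp ht) with h' | h'
    · rw [← h', h0, hG0]
    · rw [hpos t h']
      simp only [hG, hE, if_neg h'.ne']
  have main : HasDerivWithinAt h (z + 1/2 - 1/α) (Set.Ici 0) 0 :=
    (hGd.hasDerivWithinAt).congr heq (by rw [h0, hG0])
  refine ⟨main, fun b => ?_⟩
  have := main.rpow_const (p := b) (Or.inl (by rw [h0]; norm_num))
  convert this using 1
  rw [h0, Real.one_rpow]
  rw [hd]
  have hα' : α ≠ 0 := hαpos.ne'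
  field_simp
end

section
/- Let z > 0 be real, set α = ln((z+1)/z) and d = z α, let b be a real number, and define f : [0,∞) → ℝ by f(0) = 1 and, for t > 0, f(t) = ( ((1−e^{−t})/t) · ((e^t − e^{−α})/(t+α)) · (α/(1−e^{−α})) )^{b}. Then f is twice differentiable from the right at t = 0 and its second Taylor coefficient f₂ = f″(0)/2 equals (b/(24 d²)) ( 12 z² + 12 b z² + d² − 12 d² z − 12 d² z² − 24 b d z² + 12 b d² z + 12 b d² z² + 3 b d² − 12 b d z ). -/
open Set Filter Topology

noncomputable def Eaux : ℝ → ℝ := dslope Real.exp 0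

lemma Eaux_analytic : AnalyticOnNhd ℝ Eaux Set.univ := by
  intro x _
  rcases eq_or_ne x 0 with rfl | hx
  · rcases analyticAt_rexp (x := (0:ℝ)) with ⟨p, hp⟩
    exact (hp.has_fpower_series_dslope_fslope).analyticAt
  · have h1 : AnalyticAt ℝ (fun y => (Real.exp y - 1) / y) x :=
      (analyticAt_rexp.sub analyticAt_const).div analyticAt_id hx
    refine h1.congr ?_
    filter_upwards [compl_singleton_mem_nhds hx] with y hy
    rw [Eaux, dslope_of_ne _ hy, slope_def_field, Real.exp_zero, sub_zero]

lemma Eaux_diff (x : ℝ) : DifferentiableAt ℝ Eaux x :=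
  (Eaux_analytic x (Set.mem_univ x)).differentiableAt

lemma Eaux_deriv_diff (x : ℝ) : DifferentiableAt ℝ (deriv Eaux) x :=
  ((Eaux_analytic.deriv) x (Set.mem_univ x)).differentiableAt

lemma Eaux_deriv2_diff (x : ℝ) : DifferentiableAt ℝ (deriv (deriv Eaux)) x :=
  ((Eaux_analytic.deriv.deriv) x (Set.mem_univ x)).differentiableAt

lemma Eaux_id (x : ℝ) : x * Eaux x = Real.exp x - 1 := by
  rcases eq_or_ne x 0 with rfl | hx
  · simp
  · rw [Eaux, dslope_of_ne _ hx, slope_def_field, Real.exp_zero, sub_zero]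
    field_simp

lemma Eaux_id1 (x : ℝ) : Eaux x + x * deriv Eaux x = Real.exp x := by
  have h1 : HasDerivAt (fun y => y * Eaux y) (1 * Eaux x + x * deriv Eaux x) x :=
    (hasDerivAt_id x).mul (Eaux_diff x).hasDerivAt
  have h2 : (fun y : ℝ => y * Eaux y) = fun y => Real.exp y - 1 := funext Eaux_id
  rw [h2] at h1
  have h3 : HasDerivAt (fun y => Real.exp y - 1) (Real.exp x) x :=
    (Real.hasDerivAt_exp x).sub_const 1
  have := h1.unique h3
  linarith

lemma Eaux_id2 (x : ℝ) :
    2 * deriv Eaux x + x * deriv (deriv Eaux) x = Real.exp x := by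
  have h1 : HasDerivAt (fun y => Eaux y + y * deriv Eaux y)
      (deriv Eaux x + (1 * deriv Eaux x + x * deriv (deriv Eaux) x)) x :=
    (Eaux_diff x).hasDerivAt.add ((hasDerivAt_id x).mul (Eaux_deriv_diff x).hasDerivAt)
  have h2 : (fun y : ℝ => Eaux y + y * deriv Eaux y) = fun y => Real.exp y := funext Eaux_id1
  rw [h2] at h1
  have := h1.unique (Real.hasDerivAt_exp x)
  linarith

lemma Eaux_id3 (x : ℝ) :
    3 * deriv (deriv Eaux) x + x * deriv (deriv (deriv Eaux)) x = Real.exp x := by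
  have h1 : HasDerivAt (fun y => 2 * deriv Eaux y + y * deriv (deriv Eaux) y)
      (2 * deriv (deriv Eaux) x +
        (1 * deriv (deriv Eaux) x + x * deriv (deriv (deriv Eaux)) x)) x :=
    ((Eaux_deriv_diff x).hasDerivAt.const_mul 2).add
      ((hasDerivAt_id x).mul (Eaux_deriv2_diff x).hasDerivAt)
  have h2 : (fun y : ℝ => 2 * deriv Eaux y + y * deriv (deriv Eaux) y) = fun y => Real.exp y :=
    funext Eaux_id2
  rw [h2] at h1
  have := h1.unique (Real.hasDerivAt_exp x)
  linarith

lemma Eaux_zero : Eaux 0 = 1 := by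
  rw [Eaux, dslope_same, Real.deriv_exp, Real.exp_zero]

lemma Eaux_deriv_zero : deriv Eaux 0 = 1 / 2 := by
  have := Eaux_id2 0
  simp at this
  linarith

lemma Eaux_deriv2_zero : deriv (deriv Eaux) 0 = 1 / 3 := by
  have := Eaux_id3 0
  simp at this
  linarith

/-- With z > 0, α = ln((z+1)/z), d = zα, b real, and
f(t) = (((1−e^{−t})/t)·((e^t − e^{−α})/(t+α))·(α/(1−e^{−α})))^b for t > 0, f(0) = 1,
the function f is twice differentiable from the right at 0 and its second Taylor
coefficient f₂ = f″(0)/2 equals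
(b/(24d²))(12z² + 12bz² + d² − 12d²z − 12d²z² − 24bdz² + 12bd²z + 12bd²z² + 3bd² − 12bdz). -/
theorem f_second_taylor_coefficient (z : ℝ) (hz : 0 < z) (α : ℝ)
    (hα : α = Real.log ((z + 1) / z)) (d : ℝ) (hd : d = z * α) (b : ℝ) (f : ℝ → ℝ)
    (hf0 : f 0 = 1)
    (hf : ∀ t : ℝ, 0 < t →
      f t = (((1 - Real.exp (-t)) / t) * ((Real.exp t - Real.exp (-α)) / (t + α)) *
        (α / (1 - Real.exp (-α)))) ^ b) :
    (∀ᶠ t in nhdsWithin (0:ℝ) (Set.Ici 0), DifferentiableWithinAt ℝ f (Set.Ici 0) t) ∧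
    DifferentiableWithinAt ℝ (derivWithin f (Set.Ici 0)) (Set.Ici 0) 0 ∧
    derivWithin (derivWithin f (Set.Ici 0)) (Set.Ici 0) 0 / 2 =
      (b / (24 * d^2)) *
        (12 * z^2 + 12 * b * z^2 + d^2 - 12 * d^2 * z - 12 * d^2 * z^2 - 24 * b * d * z^2
          + 12 * b * d^2 * z + 12 * b * d^2 * z^2 + 3 * b * d^2 - 12 * b * d * z) := by
  have hz0 : z ≠ 0 := hz.ne'
  have hz1 : z + 1 ≠ 0 := by linarith
  have hα_pos : 0 < α := by
    rw [hα]
    apply Real.log_pos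
    rw [lt_div_iff₀ hz]; linarith
  have hα_ne : α ≠ 0 := hα_pos.ne'
  subst hd
  have hd_pos : 0 < z * α := mul_pos hz hα_pos
  have hd_ne : z * α ≠ 0 := hd_pos.ne'
  have heα : Real.exp α = (z + 1) / z := by
    rw [hα, Real.exp_log (by positivity)]
  have henα : Real.exp (-α) = z / (z + 1) := by
    rw [Real.exp_neg, heα, inv_div]
  have hs : 1 - Real.exp (-α) = 1 / (z + 1) := by
    rw [henα]; field_simp; ring
  -- values of Eaux at α
  have hEα : Eaux α = 1 / (z * α) := by
    have h := Eaux_id α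
    rw [heα] at h
    field_simp at h ⊢
    linear_combination h
  have hE1α : deriv Eaux α = (z + 1) / (z * α) - z / (z * α) ^ 2 := by
    have h := Eaux_id1 α
    rw [heα, hEα] at h
    field_simp at h ⊢
    linear_combination h
  have hE2α : deriv (deriv Eaux) α =
      (z + 1) / (z * α) - 2 * z * (z + 1) / (z * α) ^ 2 + 2 * z ^ 2 / (z * α) ^ 3 := by
    have h := Eaux_id2 α
    rw [heα, hE1α] at h
    field_simp at h ⊢
    linear_combination h
  -- the constant:  exp(-α) * (α / (1 - exp(-α))) = z * α
  have hk : Real.exp (-α) * (α / (1 - Real.exp (-α))) = z * α := by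
    rw [hs, henα]
    field_simp
  -- smooth extension
  set N : ℝ → ℝ := fun t => Eaux (-t) * Eaux (t + α) with hNdef
  set g : ℝ → ℝ := fun t => Real.exp (b * Real.log (z * α * N t)) with hgdef
  set U : Set ℝ := {t | 0 < N t} with hUdef
  have hEcont : Continuous Eaux := by
    rw [continuous_iff_continuousAt]; exact fun x => (Eaux_diff x).continuousAt
  have hNcont : Continuous N :=
    (hEcont.comp continuous_neg).mul (hEcont.comp (continuous_id.add continuous_const))
  have hUopen : IsOpen U := isOpen_lt continuous_const hNcont
  have hN0 : N 0 = 1 / (z * α) := by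
    simp only [hNdef, neg_zero, zero_add, Eaux_zero, hEα, one_mul]
  have hU0 : (0:ℝ) ∈ U := by
    rw [hUdef, Set.mem_setOf_eq, hN0]
    exact one_div_pos.mpr hd_pos
  have hg0 : g 0 = 1 := by
    simp only [hgdef, hN0, mul_one_div, div_self hd_ne, Real.log_one, mul_zero, Real.exp_zero]
  -- f = g on U ∩ Ici 0
  have hfg : ∀ t ∈ U ∩ Set.Ici (0:ℝ), f t = g t := by
    rintro t ⟨htU, ht0⟩
    rcases eq_or_lt_of_le (Set.mem_Ici.mp ht0) with rfl | hpos
    · rw [hf0, hg0]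
    · rw [hf t hpos]
      have htne : t ≠ 0 := hpos.ne'
      have hta : t + α ≠ 0 := (add_pos hpos hα_pos).ne'
      have he1 : Eaux (-t) = (1 - Real.exp (-t)) / t := by
        rw [Eaux, dslope_of_ne _ (neg_ne_zero.2 htne), slope_def_field,
          Real.exp_zero, sub_zero,
          show Real.exp (-t) - 1 = -(1 - Real.exp (-t)) by ring, neg_div_neg_eq]
      have key : Real.exp (-α) * (Real.exp (t + α) - 1) = Real.exp t - Real.exp (-α) := by
        rw [Real.exp_add, Real.exp_neg]
        have := (Real.exp_pos α).ne'
        field_simp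
      have he2 : Real.exp (-α) * Eaux (t + α) = (Real.exp t - Real.exp (-α)) / (t + α) := by
        rw [Eaux, dslope_of_ne _ hta, slope_def_field, Real.exp_zero, sub_zero, ← key]
        exact (mul_div_assoc _ _ _).symm
      have htUpos : 0 < N t := htU
      have hX : ((1 - Real.exp (-t)) / t) * ((Real.exp t - Real.exp (-α)) / (t + α)) *
          (α / (1 - Real.exp (-α))) = z * α * N t := by
        rw [← he1, ← he2, ← hk, hNdef]
        ring
      rw [hX, Real.rpow_def_of_pos (mul_pos hd_pos htUpos)]
      simp only [hgdef]
      exact congrArg Real.exp (mul_comm _ _)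
  -- derivative machinery
  have hENeg : ∀ t : ℝ, HasDerivAt (fun s : ℝ => Eaux (-s)) (-deriv Eaux (-t)) t := by
    intro t
    have := ((Eaux_diff (-t)).hasDerivAt).comp t (hasDerivAt_neg t)
    simpa [Function.comp_def, mul_neg_one] using this
  have hEShift : ∀ t : ℝ, HasDerivAt (fun s : ℝ => Eaux (s + α)) (deriv Eaux (t + α)) t := by
    intro t
    have := ((Eaux_diff (t + α)).hasDerivAt).comp t ((hasDerivAt_id t).add_const α)
    simpa [Function.comp_def] using this
  have hE1Neg : ∀ t : ℝ, HasDerivAt (fun s : ℝ => deriv Eaux (-s)) (-deriv (deriv Eaux) (-t)) t := by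
    intro t
    have := ((Eaux_deriv_diff (-t)).hasDerivAt).comp t (hasDerivAt_neg t)
    simpa [Function.comp_def, mul_neg_one] using this
  have hE1Shift : ∀ t : ℝ, HasDerivAt (fun s : ℝ => deriv Eaux (s + α)) (deriv (deriv Eaux) (t + α)) t := by
    intro t
    have := ((Eaux_deriv_diff (t + α)).hasDerivAt).comp t ((hasDerivAt_id t).add_const α)
    simpa [Function.comp_def] using this
  set N1 : ℝ → ℝ := fun t => -deriv Eaux (-t) * Eaux (t + α) + Eaux (-t) * deriv Eaux (t + α)
    with hN1def
  have hNd : ∀ t : ℝ, HasDerivAt N (N1 t) t := by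
    intro t
    exact (hENeg t).mul (hEShift t)
  set G1 : ℝ → ℝ := fun t => g t * (b * (z * α * N1 t / (z * α * N t))) with hG1def
  have hgd : ∀ t : ℝ, 0 < N t → HasDerivAt g (G1 t) t := by
    intro t ht
    have hpos : (0:ℝ) < z * α * N t := mul_pos hd_pos ht
    have hinner : HasDerivAt (fun s => z * α * N s) (z * α * N1 t) t := (hNd t).const_mul (z * α)
    have hlog := hinner.log hpos.ne'
    exact (hlog.const_mul b).exp
  set M : ℝ → ℝ := fun t =>
      deriv (deriv Eaux) (-t) * Eaux (t + α) + -deriv Eaux (-t) * deriv Eaux (t + α) +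
        (-deriv Eaux (-t) * deriv Eaux (t + α) + Eaux (-t) * deriv (deriv Eaux) (t + α))
    with hMdef
  have hN1d : ∀ t : ℝ, HasDerivAt N1 (M t) t := by
    intro t
    have a1 : HasDerivAt (fun s : ℝ => -deriv Eaux (-s)) (deriv (deriv Eaux) (-t)) t := by
      simpa using (hE1Neg t).fun_neg
    exact (a1.mul (hEShift t)).add ((hENeg t).mul (hE1Shift t))
  have hNd0ne : z * α * N 0 ≠ 0 := (mul_pos hd_pos hU0).ne'
  have hG1deriv : HasDerivAt G1
      (G1 0 * (b * (z * α * N1 0 / (z * α * N 0))) +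
        g 0 * (b * ((z * α * M 0 * (z * α * N 0) - z * α * N1 0 * (z * α * N1 0)) /
          (z * α * N 0) ^ 2))) 0 := by
    have h2 := (((hN1d 0).const_mul (z * α)).div ((hNd 0).const_mul (z * α)) hNd0ne).const_mul b
    exact (hgd 0 hU0).mul h2
  -- filter facts
  have hmem : U ∩ Set.Ici (0:ℝ) ∈ nhdsWithin (0:ℝ) (Set.Ici 0) :=
    Filter.inter_mem (mem_nhdsWithin_of_mem_nhds (hUopen.mem_nhds hU0)) self_mem_nhdsWithin
  have hfg_ev : ∀ t ∈ U ∩ Set.Ici (0:ℝ), f =ᶠ[nhdsWithin t (Set.Ici 0)] g := by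
    intro t ht
    have hmt : U ∩ Set.Ici (0:ℝ) ∈ nhdsWithin t (Set.Ici 0) :=
      Filter.inter_mem (mem_nhdsWithin_of_mem_nhds (hUopen.mem_nhds ht.1)) self_mem_nhdsWithin
    exact Filter.eventually_of_mem hmt hfg
  have hdfG : ∀ t ∈ U ∩ Set.Ici (0:ℝ), derivWithin f (Set.Ici 0) t = G1 t := by
    intro t ht
    have e1 : derivWithin f (Set.Ici 0) t = derivWithin g (Set.Ici 0) t :=
      Filter.EventuallyEq.derivWithin_eq (hfg_ev t ht) (hfg t ht)
    have e2 : derivWithin g (Set.Ici 0) t = deriv g t :=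
      (hgd t ht.1).differentiableAt.derivWithin (uniqueDiffOn_Ici 0 t ht.2)
    rw [e1, e2, (hgd t ht.1).deriv]
  have h0mem : (0:ℝ) ∈ U ∩ Set.Ici (0:ℝ) := ⟨hU0, Set.self_mem_Ici⟩
  refine ⟨?_, ?_, ?_⟩
  · exact Filter.eventually_of_mem hmem fun t ht =>
      ((hgd t ht.1).differentiableAt.differentiableWithinAt).congr_of_eventuallyEq
        (hfg_ev t ht) (hfg t ht)
  · exact (hG1deriv.differentiableAt.differentiableWithinAt).congr_of_eventuallyEq
      (Filter.eventually_of_mem hmem hdfG) (hdfG 0 h0mem)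
  · have e1 : derivWithin (derivWithin f (Set.Ici 0)) (Set.Ici 0) 0 =
        derivWithin G1 (Set.Ici 0) 0 :=
      Filter.EventuallyEq.derivWithin_eq (Filter.eventually_of_mem hmem hdfG) (hdfG 0 h0mem)
    have e2 : derivWithin G1 (Set.Ici 0) 0 = deriv G1 0 :=
      hG1deriv.differentiableAt.derivWithin (uniqueDiffOn_Ici 0 0 Set.self_mem_Ici)
    rw [e1, e2, hG1deriv.deriv]
    simp only [hG1def, hN1def, hNdef, hMdef, hg0, neg_zero, zero_add,
      Eaux_zero, Eaux_deriv_zero, Eaux_deriv2_zero, hEα, hE1α, hE2α]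
    field_simp
    ring
end
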